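/- Let k be a field of characteristic p ≠ 2. Then k⟨X⟩ = R₁ + S₁ + T⁽³⁾: every element of the free unitary algebra is a sum of an element of R₁, an element of S₁, and an element of T⁽³⁾. -/

import Mathlib

noncomputable section

/-- The ring commutator `[a,b] = a*b - b*a`. -/
def ringComm {A : Type*} [Ring A] (a b : A) : A := a * b - b * a

variable (k : Type*) [Field k]

/-- The free unitary associative `k`-algebra `k⟨X⟩` on countably many generators. -/
abbrev F : Type _ := FreeAlgebra k ℕ

/-- The generator `x_{i+1}`: we index the variables from `0`, so `X k i` is the
variable `x_{i+1}` of the paper. -/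
def X (i : ℕ) : F k := FreeAlgebra.ι k i

/-- `k₀⟨X⟩`, the free nonunitary associative algebra: the non-unital subalgebra of
`k⟨X⟩` generated by the variables, i.e. the polynomials with zero constant term. -/
def A0 : NonUnitalSubalgebra k (F k) := NonUnitalAlgebra.adjoin k (Set.range (FreeAlgebra.ι k))

/-- `T⁽³⁾` for the unitary algebra: the two-sided ideal of `k⟨X⟩` generated by all
`[[u,v],w]` with `u,v,w ∈ k⟨X⟩`. -/
def T3U : Submodule k (F k) := Submodule.span k
  {x | ∃ u v w a b : F k, x = a * ringComm (ringComm u v) w * b}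

/-- The smallest T-space `Wˢ` of the unitary algebra `k⟨X⟩` containing `W`: the linear
span of all images of elements of `W` under unital algebra endomorphisms of `k⟨X⟩`
(equivalently, under substitutions of arbitrary elements of `k⟨X⟩` for the variables). -/
def TspaceU (W : Set (F k)) : Submodule k (F k) :=
  Submodule.span k {y | ∃ σ : ℕ → F k, ∃ w ∈ W, y = FreeAlgebra.lift k σ w}

/-- The beginning `∏_{r=1}^{t} x_{i_r}^{α_r}` of an `SS`-element, encoded by the list
`bs = [(i₁,α₁),…,(i_t,α_t)]` of (index, exponent) pairs. -/
def begProd (bs : List (ℕ × ℕ)) : F k := (bs.map (fun q => X k q.1 ^ q.2)).prod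

/-- The end `∏_{r=1}^{s} [x_{j_{2r-1}},x_{j_{2r}}]·x_{j_{2r-1}}^{β_{2r-1}}·x_{j_{2r}}^{β_{2r}}`
of an `SS`-element, encoded by the list of pairs `((j_{2r-1},β_{2r-1}),(j_{2r},β_{2r}))`. -/
def endProd (es : List ((ℕ × ℕ) × (ℕ × ℕ))) : F k :=
  (es.map (fun q =>
    ringComm (X k q.1.1) (X k q.2.1) * X k q.1.1 ^ q.1.2 * X k q.2.1 ^ q.2.2)).prod

/-- The list `j₁, j₂, …, j_{2s}` of variable indices occurring in the end. -/
def endIdx : List ((ℕ × ℕ) × (ℕ × ℕ)) → List ℕ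
  | [] => []
  | q :: t => q.1.1 :: q.2.1 :: endIdx t

/-- The side conditions defining membership in the set `SS`: not both parts empty,
beginning indices `i₁ < ⋯ < i_t` strictly increasing with all exponents `α_r ≥ 1`,
end indices `j₁ < ⋯ < j_{2s}` strictly increasing, and the two index sets disjoint
(all exponents `β_r ≥ 0` is automatic in `ℕ`). -/
def SSElt (bs : List (ℕ × ℕ)) (es : List ((ℕ × ℕ) × (ℕ × ℕ))) : Prop :=
  (bs ≠ [] ∨ es ≠ []) ∧ List.Chain' (· < ·) (bs.map Prod.fst) ∧ (∀ q ∈ bs, 1 ≤ q.2) ∧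
    List.Chain' (· < ·) (endIdx es) ∧ ∀ q ∈ bs, q.1 ∉ endIdx es

/-- `R₁`: the span of `1` together with all `u ∈ SS` whose beginning is nonempty and,
if `p > 2`, such that some variable occurring in the beginning of `u` has degree in `u`
not divisible by `p`.  (Since the beginning and end indices are disjoint, the degree in
`u` of a beginning variable is its exponent there; and for `p = 0` the divisibility
condition is automatic because all beginning exponents are `≥ 1`.) -/
def R1space (p : ℕ) : Submodule k (F k) :=
  Submodule.span k
    ({(1 : F k)} ∪ {u | ∃ bs es, SSElt bs es ∧ bs ≠ [] ∧ (∃ q ∈ bs, ¬ (p ∣ q.2)) ∧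
      u = begProd k bs * endProd k es})

/-- `x₁ᵖ·∏_{i=1}^{m} [x_{2i},x_{2i+1}]·x_{2i}^{p−1}·x_{2i+1}^{p−1}` (the list factor
indexed by `i` corresponds to the paper index `i+1`; variables are 0-indexed). -/
def s1chain (p m : ℕ) : F k :=
  X k 0 ^ p * ((List.range m).map (fun i =>
    ringComm (X k (2*i+1)) (X k (2*i+2)) * X k (2*i+1) ^ (p-1) * X k (2*i+2) ^ (p-1))).prod

/-- `S₁`: equal to `S = {[x₁,x₂]}ˢ` if `char k = 0`, and to
`{[x₁,x₂], x₁ᵖ}ˢ + {x₁ᵖ·∏_{i=1}^{m}[x_{2i},x_{2i+1}]x_{2i}^{p−1}x_{2i+1}^{p−1} : m ≥ 1}ˢ`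
if `char k = p > 2`, with T-spaces taken in the unitary algebra `k⟨X⟩`. -/
def S1space (p : ℕ) : Submodule k (F k) :=
  if p = 0 then TspaceU k {ringComm (X k 0) (X k 1)}
  else TspaceU k {ringComm (X k 0) (X k 1), X k 0 ^ p} ⊔
    TspaceU k {u | ∃ m, 1 ≤ m ∧ u = s1chain k p m}

section Chunk1

namespace St16

variable {k : Type*} [Field k]

/-! ### Basic commutator identities -/

theorem comm_self (a : F k) : ringComm a a = 0 := sub_self _

theorem comm_antisymm (a b : F k) : ringComm a b = -ringComm b a := by
  unfold ringComm; abel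

theorem comm_one_right (a : F k) : ringComm a 1 = 0 := by
  unfold ringComm; simp

theorem comm_one_left (a : F k) : ringComm 1 a = 0 := by
  unfold ringComm; simp

theorem comm_mul_right (a b c : F k) :
    ringComm a (b * c) = ringComm a b * c + b * ringComm a c := by
  unfold ringComm; noncomm_ring

theorem comm_mul_left (a b c : F k) :
    ringComm (a * b) c = a * ringComm b c + ringComm a c * b := by
  unfold ringComm; noncomm_ring

theorem comm_add_right (a b c : F k) :
    ringComm a (b + c) = ringComm a b + ringComm a c := by
  unfold ringComm; noncomm_ring

/-! ### T3U basics -/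

theorem t3_gen (u v w a b : F k) : a * ringComm (ringComm u v) w * b ∈ T3U k :=
  Submodule.subset_span ⟨u, v, w, a, b, rfl⟩

theorem t3_gen' (u v w : F k) : ringComm (ringComm u v) w ∈ T3U k := by
  simpa using t3_gen u v w 1 1

theorem t3_mul_left {x : F k} (hx : x ∈ T3U k) (a : F k) : a * x ∈ T3U k := by
  induction hx using Submodule.span_induction with
  | mem x hx =>
    obtain ⟨u, v, w, c, d, rfl⟩ := hx
    have : a * (c * ringComm (ringComm u v) w * d)
        = (a * c) * ringComm (ringComm u v) w * d := by noncomm_ring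
    rw [this]; exact t3_gen _ _ _ _ _
  | zero => simpa using (T3U k).zero_mem
  | add x y _ _ hx hy => rw [mul_add]; exact add_mem hx hy
  | smul c x _ hx => rw [mul_smul_comm]; exact Submodule.smul_mem _ _ hx

theorem t3_mul_right {x : F k} (hx : x ∈ T3U k) (b : F k) : x * b ∈ T3U k := by
  induction hx using Submodule.span_induction with
  | mem x hx =>
    obtain ⟨u, v, w, c, d, rfl⟩ := hx
    have : (c * ringComm (ringComm u v) w * d) * b
        = c * ringComm (ringComm u v) w * (d * b) := by noncomm_ring
    rw [this]; exact t3_gen _ _ _ _ _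
  | zero => simpa using (T3U k).zero_mem
  | add x y _ _ hx hy => rw [add_mul]; exact add_mem hx hy
  | smul c x _ hx => rw [smul_mul_assoc]; exact Submodule.smul_mem _ _ hx

theorem t3_sandwich {x : F k} (hx : x ∈ T3U k) (a b : F k) : a * x * b ∈ T3U k :=
  t3_mul_right (t3_mul_left hx a) b

theorem comm_comm_central (a u v : F k) : ringComm a (ringComm u v) ∈ T3U k := by
  rw [comm_antisymm]; exact neg_mem (t3_gen' u v a)

/-! ### Congruence modulo T3U -/

def Cgr (a b : F k) : Prop := a - b ∈ T3U k

theorem Cgr.refl (a : F k) : Cgr a a := by simp [Cgr, (T3U k).zero_mem]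

theorem Cgr.symm {a b : F k} (h : Cgr a b) : Cgr b a := by
  have := neg_mem h; simpa [Cgr, neg_sub] using this

theorem Cgr.trans {a b c : F k} (h1 : Cgr a b) (h2 : Cgr b c) : Cgr a c := by
  have := add_mem h1 h2; simpa [Cgr, sub_add_sub_cancel] using this

theorem cgr_of_mem {x : F k} (hx : x ∈ T3U k) : Cgr x 0 := by
  simpa [Cgr] using hx

theorem mem_of_cgr_zero {x : F k} (h : Cgr x 0) : x ∈ T3U k := by
  simpa [Cgr] using h

theorem Cgr.mem {a b : F k} (h : Cgr a b) (hb : b ∈ T3U k) : a ∈ T3U k := by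
  have := add_mem h hb; simpa [Cgr] using this

theorem Cgr.add {a b c d : F k} (h1 : Cgr a b) (h2 : Cgr c d) : Cgr (a + c) (b + d) := by
  have := add_mem h1 h2
  simpa [Cgr, sub_add_sub_comm] using this

theorem Cgr.neg {a b : F k} (h : Cgr a b) : Cgr (-a) (-b) := by
  show -a - -b ∈ _
  rw [neg_sub_neg]; exact h.symm

theorem Cgr.sub {a b c d : F k} (h1 : Cgr a b) (h2 : Cgr c d) : Cgr (a - c) (b - d) := by
  have := sub_mem h1 h2
  have e : a - b - (c - d) = a - c - (b - d) := by abel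
  simpa [Cgr, e] using this

theorem Cgr.smul {a b : F k} (c : k) (h : Cgr a b) : Cgr (c • a) (c • b) := by
  have := Submodule.smul_mem (T3U k) c h
  simpa [Cgr, smul_sub] using this

theorem Cgr.nsmul {a b : F k} (n : ℕ) (h : Cgr a b) : Cgr (n • a) (n • b) := by
  have : ((n : k)) • a - ((n : k)) • b ∈ T3U k := by
    have := Submodule.smul_mem (T3U k) (n : k) h
    simpa [smul_sub] using this
  simpa [Cgr, Nat.cast_smul_eq_nsmul] using this

theorem Cgr.mul_left {a b : F k} (c : F k) (h : Cgr a b) : Cgr (c * a) (c * b) := by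
  have := t3_mul_left h c
  simpa [Cgr, mul_sub] using this

theorem Cgr.mul_right {a b : F k} (c : F k) (h : Cgr a b) : Cgr (a * c) (b * c) := by
  have := t3_mul_right h c
  simpa [Cgr, sub_mul] using this

theorem Cgr.mul {a b c d : F k} (h1 : Cgr a b) (h2 : Cgr c d) : Cgr (a * c) (b * d) :=
  (h1.mul_right c).trans (h2.mul_left b)

theorem cgr_of_eq {a b : F k} (h : a = b) : Cgr a b := h ▸ Cgr.refl a

/-! ### Central elements -/

def IsC (c : F k) : Prop := ∀ a : F k, ringComm a c ∈ T3U k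

theorem isc_comm (u v : F k) : IsC (ringComm u v) := fun a => comm_comm_central a u v

theorem isc_one : IsC (1 : F k) := fun a => by
  rw [comm_one_right]; exact (T3U k).zero_mem

theorem IsC.mul {c d : F k} (hc : IsC c) (hd : IsC d) : IsC (c * d) := fun a => by
  rw [comm_mul_right]
  exact add_mem (t3_mul_right (hc a) d) (t3_mul_left (hd a) c)

theorem IsC.swap {c : F k} (hc : IsC c) (a : F k) : Cgr (a * c) (c * a) := by
  have := hc a
  simpa [Cgr, ringComm] using this

theorem IsC.swap' {c : F k} (hc : IsC c) (a : F k) : Cgr (c * a) (a * c) := (hc.swap a).symm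

/-- move a central factor out of the middle -/
theorem isc_mid {c : F k} (hc : IsC c) (a b : F k) : Cgr (a * c * b) (c * (a * b)) := by
  have h1 : Cgr (a * c) (c * a) := hc.swap a
  have := h1.mul_right b
  exact this.trans (cgr_of_eq (by rw [mul_assoc]))

theorem comm_pow (a c : F k) (n : ℕ) :
    Cgr (ringComm a (c ^ (n + 1))) ((n + 1) • (c ^ n * ringComm a c)) := by
  induction n with
  | zero => simpa using Cgr.refl (ringComm a c)
  | succ n ih =>
    have e1 : c ^ (n + 2) = c ^ (n + 1) * c := by rw [pow_succ]
    rw [e1, comm_mul_right]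
    have h1 : Cgr (ringComm a (c ^ (n + 1)) * c) ((n + 1) • (c ^ n * ringComm a c * c)) := by
      have := ih.mul_right c
      simpa only [smul_mul_assoc] using this
    have h2 : Cgr (c ^ n * ringComm a c * c) (c ^ (n + 1) * ringComm a c) := by
      have hswap : Cgr (ringComm a c * c) (c * ringComm a c) := (isc_comm a c).swap' c
      have := hswap.mul_left (c ^ n)
      refine (cgr_of_eq (by rw [mul_assoc])).trans (this.trans (cgr_of_eq ?_))
      rw [← mul_assoc, ← pow_succ]
    have h3 : Cgr (ringComm a (c ^ (n + 1)) * c) ((n + 1) • (c ^ (n + 1) * ringComm a c)) :=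
      h1.trans (h2.nsmul (n + 1))
    have h4 := h3.add (Cgr.refl (c ^ (n + 1) * ringComm a c))
    refine h4.trans (cgr_of_eq ?_)
    conv_rhs => rw [succ_nsmul]

/-! ### Identity I and kill lemmas -/

theorem idI (a b c d : F k) :
    ringComm a b * ringComm c d + ringComm c b * ringComm a d ∈ T3U k := by
  have key : ringComm a b * ringComm c d + ringComm c b * ringComm a d =
      ringComm a (ringComm c (b * d)) - ringComm a (ringComm c b) * d
        - b * ringComm a (ringComm c d) := by
    unfold ringComm; noncomm_ring
  rw [key]
  exact sub_mem (sub_mem (comm_comm_central a c (b * d))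
    (t3_mul_right (comm_comm_central a c b) d)) (t3_mul_left (comm_comm_central a c d) b)

theorem kill_12 (a b d : F k) : ringComm a b * ringComm b d ∈ T3U k := by
  have := idI a b b d
  simpa [comm_self] using this

theorem kill_21 (a b c : F k) : ringComm a b * ringComm c a ∈ T3U k := by
  have := idI a b c a
  simpa [comm_self] using this

theorem half_mem {x : F k} (h2 : (2 : k) ≠ 0) (hx : x + x ∈ T3U k) : x ∈ T3U k := by
  have h : (2 : k) • x ∈ T3U k := by
    have e : ((2 : k)) • x = x + x := by
      rw [show ((2 : k)) = ((2 : ℕ) : k) by norm_num, Nat.cast_smul_eq_nsmul, two_nsmul]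
    rw [e]; exact hx
  have := Submodule.smul_mem (T3U k) (2 : k)⁻¹ h
  rwa [inv_smul_smul₀ h2] at this

theorem kill_11 (h2 : (2 : k) ≠ 0) (a b d : F k) : ringComm a b * ringComm a d ∈ T3U k := by
  apply half_mem h2
  exact idI a b a d

theorem kill_22 (h2 : (2 : k) ≠ 0) (a b c : F k) : ringComm a b * ringComm c b ∈ T3U k := by
  apply half_mem h2
  have h1 := idI a b c b
  have hxy : ringComm a b * ringComm c b - ringComm c b * ringComm a b ∈ T3U k := by
    have := isc_comm c b (ringComm a b)
    simpa [ringComm] using this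
  have := add_mem h1 hxy
  have e : ringComm a b * ringComm c b + ringComm c b * ringComm a b
      + (ringComm a b * ringComm c b - ringComm c b * ringComm a b)
      = ringComm a b * ringComm c b + ringComm a b * ringComm c b := by abel
  rwa [e] at this

theorem kill_sq (h2 : (2 : k) ≠ 0) (a b : F k) : ringComm a b * ringComm a b ∈ T3U k :=
  kill_11 h2 a b b

theorem isc_pow_char {p : ℕ} (hpk : (p : k) = 0) (u : F k) : IsC (u ^ p) := by
  intro a
  cases p with
  | zero => rw [pow_zero, comm_one_right]; exact (T3U k).zero_mem
  | succ n =>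
    have h := comm_pow a u n
    have hc : ((n + 1 : ℕ) : k) = 0 := by exact_mod_cast hpk
    have hz : ((n + 1 : ℕ)) • (u ^ n * ringComm a u) = (0 : F k) := by
      rw [← Nat.cast_smul_eq_nsmul k, hc, zero_smul]
    rw [hz] at h
    exact mem_of_cgr_zero h

end St16

end Chunk1
section Chunk2

namespace St16

variable {k : Type*} [Field k]

theorem mem_TspaceU {W : Set (F k)} (σ : ℕ → F k) {w : F k} (hw : w ∈ W) :
    (FreeAlgebra.lift k σ) w ∈ TspaceU k W :=
  Submodule.subset_span ⟨σ, w, hw, rfl⟩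

theorem comm_mem_S1 (p : ℕ) (u v : F k) : ringComm u v ∈ S1space k p := by
  have hcomp : ∀ (σ : ℕ → F k), (FreeAlgebra.lift k σ) (ringComm (X k 0) (X k 1))
      = ringComm (σ 0) (σ 1) := by
    intro σ
    simp [ringComm, X, map_sub, map_mul, FreeAlgebra.lift_ι_apply]
  set σ : ℕ → F k := fun n => if n = 0 then u else v with hσ
  have h : ringComm u v = (FreeAlgebra.lift k σ) (ringComm (X k 0) (X k 1)) := by
    rw [hcomp]; simp [hσ]
  rw [S1space]
  by_cases hp : p = 0
  · rw [if_pos hp, h]; exact mem_TspaceU σ rfl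
  · rw [if_neg hp]
    refine Submodule.mem_sup_left ?_
    rw [h]; exact mem_TspaceU σ (Or.inl rfl)

theorem pow_mem_S1 {p : ℕ} (hp : p ≠ 0) (u : F k) : u ^ p ∈ S1space k p := by
  rw [S1space, if_neg hp]
  refine Submodule.mem_sup_left ?_
  have h : u ^ p = (FreeAlgebra.lift k (fun _ => u)) (X k 0 ^ p) := by
    simp [X, map_pow, FreeAlgebra.lift_ι_apply]
  rw [h]; exact mem_TspaceU _ (Or.inr rfl)

theorem chain_mem_S1 {p : ℕ} (hp : p ≠ 0) (σ : ℕ → F k) {m : ℕ} (hm : 1 ≤ m) :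
    σ 0 ^ p * ((List.range m).map (fun i =>
      ringComm (σ (2*i+1)) (σ (2*i+2)) * σ (2*i+1) ^ (p-1) * σ (2*i+2) ^ (p-1))).prod
      ∈ S1space k p := by
  rw [S1space, if_neg hp]
  refine Submodule.mem_sup_right ?_
  have h : σ 0 ^ p * ((List.range m).map (fun i =>
      ringComm (σ (2*i+1)) (σ (2*i+2)) * σ (2*i+1) ^ (p-1) * σ (2*i+2) ^ (p-1))).prod
      = (FreeAlgebra.lift k σ) (s1chain k p m) := by
    rw [s1chain, map_mul, map_pow, map_list_prod, List.map_map]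
    congr 1
    · simp [X, FreeAlgebra.lift_ι_apply]
    · congr 1
      apply List.map_congr_left
      intro i _
      simp [ringComm, X, map_sub, map_mul, map_pow, FreeAlgebra.lift_ι_apply,
        Function.comp]
  rw [h]; exact mem_TspaceU σ ⟨m, hm, rfl⟩

/-! ### Words and commutator products -/

def wrd (k : Type*) [Field k] (l : List ℕ) : F k := (l.map (X k)).prod

def cP (k : Type*) [Field k] (γ : List (ℕ × ℕ)) : F k :=
  (γ.map (fun q => ringComm (X k q.1) (X k q.2))).prod

@[simp] theorem wrd_nil : wrd k [] = 1 := rfl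

@[simp] theorem wrd_cons (i : ℕ) (l : List ℕ) : wrd k (i :: l) = X k i * wrd k l := by
  simp [wrd]

theorem wrd_append (l₁ l₂ : List ℕ) : wrd k (l₁ ++ l₂) = wrd k l₁ * wrd k l₂ := by
  simp [wrd]

theorem wrd_replicate (n v : ℕ) : wrd k (List.replicate n v) = X k v ^ n := by
  simp [wrd, List.map_replicate, List.prod_replicate]

@[simp] theorem cP_nil : cP k [] = 1 := rfl

@[simp] theorem cP_cons (q : ℕ × ℕ) (γ : List (ℕ × ℕ)) :
    cP k (q :: γ) = ringComm (X k q.1) (X k q.2) * cP k γ := by simp [cP]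

theorem cP_append (γ₁ γ₂ : List (ℕ × ℕ)) : cP k (γ₁ ++ γ₂) = cP k γ₁ * cP k γ₂ := by
  simp [cP]

theorem isc_cP (γ : List (ℕ × ℕ)) : IsC (cP k γ) := by
  induction γ with
  | nil => simpa [cP] using isc_one
  | cons q t ih => rw [cP_cons]; exact (isc_comm _ _).mul ih

/-! ### The target submodule -/

def NN (k : Type*) [Field k] (p : ℕ) : Submodule k (F k) :=
  R1space k p ⊔ S1space k p ⊔ T3U k

theorem t3_le_NN (p : ℕ) : T3U k ≤ NN k p := le_sup_right

theorem s1_le_NN (p : ℕ) : S1space k p ≤ NN k p :=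
  le_trans le_sup_right le_sup_left

theorem r1_le_NN (p : ℕ) : R1space k p ≤ NN k p :=
  le_trans le_sup_left le_sup_left

theorem Cgr.memNN {p : ℕ} {a b : F k} (h : Cgr a b) (hb : b ∈ NN k p) : a ∈ NN k p := by
  have : a = (a - b) + b := by abel
  rw [this]
  exact add_mem (t3_le_NN p h) hb

theorem Cgr.memNN_smul {p : ℕ} {a b : F k} (ε : k) (h : Cgr a (ε • b)) (hb : b ∈ NN k p) :
    a ∈ NN k p :=
  h.memNN (Submodule.smul_mem _ ε hb)

theorem one_mem_NN (p : ℕ) : (1 : F k) ∈ NN k p :=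
  r1_le_NN p (Submodule.subset_span (Or.inl rfl))

theorem memT3_memNN {p : ℕ} {a b : F k} (h : Cgr a b) (hb : b ∈ T3U k) : a ∈ NN k p :=
  h.memNN (t3_le_NN p hb)

end St16

end Chunk2
section Chunk3

namespace St16

variable {k : Type*} [Field k]

theorem nsmul_mem_T3U {x : F k} (hx : x ∈ T3U k) (n : ℕ) : n • x ∈ T3U k := by
  induction n with
  | zero => simpa using (T3U k).zero_mem
  | succ m ih => rw [succ_nsmul]; exact add_mem ih hx

/-- a central square-zero element sandwiched twice kills everything -/
theorem zmidkill (h2 : (2 : k) ≠ 0) (c d w₁ w₂ : F k) :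
    ringComm c d * w₁ * ringComm c d * w₂ ∈ T3U k := by
  set z := ringComm c d with hz
  have hzz : z * z ∈ T3U k := kill_sq h2 c d
  have h1 : Cgr (z * w₁ * z * w₂) (z * z * (w₁ * w₂)) := by
    have hsw : Cgr (w₁ * z) (z * w₁) := (isc_comm c d).swap w₁
    have := (hsw.mul_left z).mul_right w₂
    refine (cgr_of_eq ?_).trans (this.trans (cgr_of_eq ?_)) <;> noncomm_ring
  exact h1.mem (t3_mul_right hzz (w₁ * w₂))

theorem zcdk (h2 : (2 : k) ≠ 0) (c d w₁ w₂ : F k) (m : ℕ) :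
    ringComm c d * w₁ * ringComm c (d ^ m) * w₂ ∈ T3U k := by
  set z := ringComm c d with hz
  cases m with
  | zero => rw [pow_zero, comm_one_right]; simpa using (T3U k).zero_mem
  | succ e =>
    have hp := comm_pow c d e
    have h1 : Cgr (z * w₁ * ringComm c (d ^ (e+1)) * w₂)
        ((e+1) • (z * (w₁ * d ^ e) * z * w₂)) := by
      have := ((hp.mul_left (z * w₁)).mul_right w₂)
      refine this.trans (cgr_of_eq ?_)
      rw [mul_smul_comm, smul_mul_assoc]
      congr 1
      noncomm_ring
    exact h1.mem (nsmul_mem_T3U (zmidkill h2 c d (w₁ * d ^ e) w₂) (e+1))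

theorem frob_aux (h2 : (2 : k) ≠ 0) (c d : F k) (n : ℕ) :
    Cgr ((c*d)^(n+1))
      (c^(n+1) * d^(n+1) - (Nat.choose (n+1) 2) • (ringComm c d * c^n * d^n)) := by
  set z := ringComm c d with hz
  induction n with
  | zero => refine cgr_of_eq ?_; simp
  | succ n ih =>
    have step1 : Cgr ((c*d)^(n+2))
        ((c^(n+1) * d^(n+1) - (Nat.choose (n+1) 2) • (z * c^n * d^n)) * (c * d)) := by
      have : (c*d)^(n+2) = (c*d)^(n+1) * (c*d) := by rw [pow_succ]
      rw [this]; exact ih.mul_right (c*d)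
    -- A-term
    have hA : Cgr (c^(n+1) * d^(n+1) * (c * d))
        (c^(n+2) * d^(n+2) - (n+1) • (z * c^(n+1) * d^(n+1))) := by
      have e1 : c^(n+1) * d^(n+1) * (c * d)
          = c^(n+1) * (d^(n+1) * c) * d := by noncomm_ring
      have e2 : d^(n+1) * c = c * d^(n+1) - ringComm c (d^(n+1)) := by
        unfold ringComm; noncomm_ring
      rw [e1, e2]
      have e3 : c^(n+1) * (c * d^(n+1) - ringComm c (d^(n+1))) * d
          = c^(n+2) * d^(n+2) - c^(n+1) * ringComm c (d^(n+1)) * d := by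
        rw [mul_sub, sub_mul]
        congr 1
        rw [pow_succ, pow_succ]; noncomm_ring
      rw [e3]
      refine (Cgr.refl _).sub ?_
      -- c^(n+1) * [c, d^(n+1)] * d ≋ (n+1) • (z * c^(n+1) * d^(n+1))
      have h4 := (comm_pow c d n).mul_left (c^(n+1)) |>.mul_right d
      refine h4.trans ?_
      have e5 : c^(n+1) * ((n+1) • (d^n * z)) * d = (n+1) • (c^(n+1) * d^n * z * d) := by
        rw [mul_smul_comm, smul_mul_assoc]; congr 1; noncomm_ring
      rw [e5]
      refine Cgr.nsmul _ ?_
      -- c^(n+1) * d^n * z * d ≋ z * c^(n+1) * d^(n+1)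
      have hsw : Cgr (z * d) (d * z) := ((isc_comm c d).swap d).symm
      have h6 := hsw.mul_left (c^(n+1) * d^n)
      have h7 : Cgr (c^(n+1) * d^n * (d * z)) (z * c^(n+1) * d^(n+1)) := by
        have e6 : c^(n+1) * d^n * (d * z) = (c^(n+1) * d^(n+1)) * z := by
          rw [pow_succ]; noncomm_ring
        rw [e6]
        have := ((isc_comm c d).swap (c^(n+1) * d^(n+1)))
        refine this.trans (cgr_of_eq ?_); noncomm_ring
      exact (cgr_of_eq (by noncomm_ring)).trans (h6.trans h7)
    -- B-term
    have hB : Cgr (z * c^n * d^n * (c * d)) (z * c^(n+1) * d^(n+1)) := by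
      have e2 : d^n * c = c * d^n - ringComm c (d^n) := by
        unfold ringComm; noncomm_ring
      have e0 : z * c^n * d^n * (c * d) = z * c^n * (d^n * c) * d := by noncomm_ring
      rw [e0, e2, mul_sub, sub_mul]
      have hkill : z * c^n * ringComm c (d^n) * d ∈ T3U k := zcdk h2 c d (c^n) d n
      have : Cgr (z * c^n * (c * d^n) * d - z * c^n * ringComm c (d^n) * d)
          (z * c^n * (c * d^n) * d) := by
        have := cgr_of_mem hkill
        have h0 := (Cgr.refl (z * c^n * (c * d^n) * d)).sub this
        simpa using h0
      refine this.trans (cgr_of_eq ?_)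
      rw [pow_succ, pow_succ]; noncomm_ring
    -- combine
    have step2 : Cgr ((c^(n+1) * d^(n+1) - (Nat.choose (n+1) 2) • (z * c^n * d^n)) * (c * d))
        ((c^(n+2) * d^(n+2) - (n+1) • (z * c^(n+1) * d^(n+1)))
          - (Nat.choose (n+1) 2) • (z * c^(n+1) * d^(n+1))) := by
      have e : (c^(n+1) * d^(n+1) - (Nat.choose (n+1) 2) • (z * c^n * d^n)) * (c * d)
          = c^(n+1) * d^(n+1) * (c * d)
            - (Nat.choose (n+1) 2) • (z * c^n * d^n * (c * d)) := by
        rw [sub_mul, smul_mul_assoc]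
      rw [e]
      exact hA.sub (hB.nsmul _)
    refine (step1.trans step2).trans (cgr_of_eq ?_)
    have hch : Nat.choose (n+2) 2 = Nat.choose (n+1) 2 + (n+1) := by
      rw [Nat.choose_succ_succ (n+1) 1, Nat.choose_one_right, Nat.add_comm]
    have hw : (n+1) • (z * c ^ (n + 1) * d ^ (n + 1))
        + (Nat.choose (n+1) 2) • (z * c ^ (n + 1) * d ^ (n + 1))
        = (Nat.choose (n+1) 2 + (n+1)) • (z * c ^ (n + 1) * d ^ (n + 1)) := by
      rw [← add_nsmul, Nat.add_comm]
    rw [hch, sub_sub, hw]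

theorem frob (h2 : (2 : k) ≠ 0) {p : ℕ} (hpk : (p : k) = 0) (hodd : p % 2 = 1)
    (c d : F k) : Cgr ((c*d)^p) (c^p * d^p) := by
  obtain ⟨n, rfl⟩ : ∃ n, p = n + 1 := ⟨p - 1, by omega⟩
  have h := frob_aux h2 c d n
  have hcoef : ((Nat.choose (n+1) 2 : ℕ) : k) = 0 := by
    obtain ⟨t, ht⟩ : ∃ t, n = 2 * t := ⟨n / 2, by omega⟩
    have hth : Nat.choose (n+1) 2 = (n+1) * t := by
      rw [Nat.choose_two_right]
      simp only [Nat.add_sub_cancel]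
      rw [ht, Nat.mul_div_assoc _ ⟨t, rfl⟩]
      congr 1
      omega
    rw [hth]
    push_cast at hpk ⊢
    rw [hpk]
    ring
  have hz : (Nat.choose (n+1) 2) • (ringComm c d * c^n * d^n) = (0 : F k) := by
    rw [← Nat.cast_smul_eq_nsmul k, hcoef, zero_smul]
  rw [hz] at h
  simpa using h

theorem frob_list (h2 : (2 : k) ≠ 0) {p : ℕ} (hpk : (p : k) = 0) (hodd : p % 2 = 1)
    (us : List (F k)) : Cgr ((us.map (· ^ p)).prod) (us.prod ^ p) := by
  induction us with
  | nil => exact cgr_of_eq (by simp)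
  | cons u t ih =>
    rw [List.map_cons, List.prod_cons, List.prod_cons]
    have h1 := ih.mul_left (u ^ p)
    refine h1.trans ?_
    exact (frob h2 hpk hodd u t.prod).symm

end St16

end Chunk3
section Chunk4

namespace St16

variable {k : Type*} [Field k]

theorem comm_pow_self_right (y : F k) (a : ℕ) : ringComm y (y ^ a) = 0 := by
  rw [ringComm, sub_eq_zero]
  exact ((Commute.refl y).pow_right a).eq

theorem comm_pow_self_left (y : F k) (a : ℕ) : ringComm (y ^ a) y = 0 := by
  rw [ringComm, sub_eq_zero]
  exact ((Commute.refl y).pow_left a).eq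

theorem pair_sandwich {z₁ z₂ : F k} (hc : IsC z₂) (hmem : z₁ * z₂ ∈ T3U k)
    (w₁ w₂ : F k) : z₁ * w₁ * z₂ * w₂ ∈ T3U k := by
  have h1 : Cgr (z₁ * w₁ * z₂ * w₂) (z₁ * z₂ * (w₁ * w₂)) := by
    have hsw : Cgr (w₁ * z₂) (z₂ * w₁) := hc.swap w₁
    have := (hsw.mul_left z₁).mul_right w₂
    refine (cgr_of_eq ?_).trans (this.trans (cgr_of_eq ?_)) <;> noncomm_ring
  exact h1.mem (t3_mul_right hmem (w₁ * w₂))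

theorem zpair (h2 : (2 : k) ≠ 0) (y z c d : F k) (hc : c = y ∨ c = z)
    (hd : d = y ∨ d = z) : ringComm y z * ringComm c d ∈ T3U k := by
  rcases hc with rfl | rfl <;> rcases hd with rfl | rfl
  · rw [comm_self]; simpa using (T3U k).zero_mem
  · exact kill_11 h2 _ _ _
  · exact kill_12 _ _ _
  · rw [comm_self]; simpa using (T3U k).zero_mem

/-- `[y,z] * w₁ * [c^i, d^j] * w₂ ∈ T3U` whenever `c, d ∈ {y, z}`. -/
theorem zPPk (h2 : (2 : k) ≠ 0) (y z c d w₁ w₂ : F k) (hc : c = y ∨ c = z)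
    (hd : d = y ∨ d = z) (i j : ℕ) :
    ringComm y z * w₁ * ringComm (c ^ i) (d ^ j) * w₂ ∈ T3U k := by
  cases j with
  | zero => rw [pow_zero, comm_one_right]; simpa using (T3U k).zero_mem
  | succ e =>
    cases i with
    | zero =>
      rw [pow_zero, comm_one_left]
      simpa using (T3U k).zero_mem
    | succ f =>
      -- [c^(f+1), d^(e+1)] ≋ (e+1)•(d^e * [c^(f+1), d])
      have h1 : Cgr (ringComm (c ^ (f+1)) (d ^ (e+1)))
          ((e+1) • (d ^ e * ringComm (c ^ (f+1)) d)) := comm_pow _ d e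
      -- [c^(f+1), d] = -[d, c^(f+1)] ≋ -((f+1)•(c^f * [d,c]))
      have h2' : Cgr (ringComm (c ^ (f+1)) d) (-((f+1) • (c ^ f * ringComm d c))) := by
        rw [comm_antisymm]
        exact (comm_pow d c f).neg
      have h3 : Cgr (ringComm (c ^ (f+1)) (d ^ (e+1)))
          ((e+1) • (d ^ e * (-((f+1) • (c ^ f * ringComm d c))))) :=
        h1.trans (Cgr.nsmul _ (h2'.mul_left (d ^ e)))
      have h4 := (h3.mul_left (ringComm y z * w₁)).mul_right w₂
      refine h4.mem ?_
      have e1 : ringComm y z * w₁ * ((e+1) • (d ^ e * (-((f+1) • (c ^ f * ringComm d c))))) * w₂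
          = -(((e+1) * (f+1)) • (ringComm y z * (w₁ * d ^ e * c ^ f) * ringComm d c * w₂)) := by
        simp only [mul_neg, neg_mul, smul_neg, mul_smul_comm, smul_mul_assoc, smul_smul]
        congr 2
        noncomm_ring
      rw [e1]
      refine neg_mem (nsmul_mem_T3U ?_ _)
      refine pair_sandwich (isc_comm d c) ?_ _ _
      refine zpair h2 y z d c hd hc

/-- Lemma A: absorb a central factor into a commutator. -/
theorem comm_absorb {c : F k} (hc : IsC c) (u v : F k) :
    Cgr (ringComm u v * c) (ringComm u (v * c)) := by
  show _ - _ ∈ _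
  rw [comm_mul_right]
  have e : ringComm u v * c - (ringComm u v * c + v * ringComm u c)
      = -(v * ringComm u c) := by abel
  rw [e]
  exact neg_mem (t3_mul_left (hc u) v)

theorem cgr_smul_cancel {n : k} (hn : n ≠ 0) {x u : F k} (h : Cgr x (n • u)) :
    Cgr u (n⁻¹ • x) := by
  have := h.symm.smul n⁻¹
  rwa [inv_smul_smul₀ hn] at this

/-- good factor, variant A: `[y, z y^a z^b] ≋ (b+1) • ([y,z] y^a z^b)` -/
theorem goodA (h2 : (2 : k) ≠ 0) (y z : F k) (a b : ℕ) :
    Cgr (ringComm y (z * y ^ a * z ^ b)) ((b+1) • (ringComm y z * y ^ a * z ^ b)) := by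
  have e0 : z * y ^ a * z ^ b = z * (y ^ a * z ^ b) := by rw [mul_assoc]
  rw [e0, comm_mul_right]
  have e1 : ringComm y (y ^ a * z ^ b) = y ^ a * ringComm y (z ^ b) := by
    rw [comm_mul_right, comm_pow_self_right]
    simp
  rw [e1]
  cases b with
  | zero =>
    rw [pow_zero, comm_one_right]
    refine cgr_of_eq ?_
    simp
  | succ e =>
    have h1 : Cgr (ringComm y (z ^ (e+1))) ((e+1) • (z ^ e * ringComm y z)) := comm_pow y z e
    have h2' : Cgr (z * (y ^ a * ringComm y (z ^ (e+1))))
        ((e+1) • (z * (y ^ a * (z ^ e * ringComm y z)))) := by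
      have := (h1.mul_left (y ^ a)).mul_left z
      refine this.trans (cgr_of_eq ?_)
      rw [mul_smul_comm, mul_smul_comm]
    -- now z * (y^a * (z^e * [y,z])) ≋ [y,z] * y^a * z^(e+1)  (mod kills)
    have h3 : Cgr (z * (y ^ a * (z ^ e * ringComm y z))) (ringComm y z * y ^ a * z ^ (e+1)) := by
      have hsw : Cgr (z * (y ^ a * (z ^ e * ringComm y z)))
          (ringComm y z * (z * y ^ a * z ^ e)) := by
        have := (isc_comm y z).swap (z * (y ^ a * z ^ e))
        refine (cgr_of_eq ?_).trans (this.trans (cgr_of_eq ?_)) <;> noncomm_ring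
      refine hsw.trans ?_
      have ezy : z * y ^ a = y ^ a * z - ringComm (y ^ a) z := by
        unfold ringComm; noncomm_ring
      have e2 : ringComm y z * (z * y ^ a * z ^ e)
          = ringComm y z * y ^ a * z ^ (e+1) - ringComm y z * 1 * ringComm (y ^ a) (z ^ 1) * z ^ e := by
        rw [ezy, pow_one, pow_succ]
        noncomm_ring
        rw [((Commute.refl z).pow_right e).eq]
        abel
      rw [e2]
      have hk : ringComm y z * 1 * ringComm (y ^ a) (z ^ 1) * z ^ e ∈ T3U k :=
        zPPk h2 y z y z 1 (z ^ e) (Or.inl rfl) (Or.inr rfl) a 1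
      have := (Cgr.refl (ringComm y z * y ^ a * z ^ (e+1))).sub (cgr_of_mem hk)
      simpa using this
    have h4 := h2'.trans (Cgr.nsmul (e+1) h3)
    -- combine:  [y,z]*(y^a*z^(e+1)) + (e+1)•(...)  = (e+2)•(...)
    have h5 := (Cgr.refl (ringComm y z * (y ^ a * z ^ (e+1)))).add h4
    refine h5.trans (cgr_of_eq ?_)
    rw [succ_nsmul ((ringComm y z * y ^ a * z ^ (e+1))) (e+1)]
    rw [add_comm]
    congr 1
    rw [mul_assoc]

/-- good factor, variant B: `[y z^b y^a, z] ≋ (a+1) • ([y,z] y^a z^b)` -/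
theorem goodB (h2 : (2 : k) ≠ 0) (y z : F k) (a b : ℕ) :
    Cgr (ringComm (y * z ^ b * y ^ a) z) ((a+1) • (ringComm y z * y ^ a * z ^ b)) := by
  have e0 : y * z ^ b * y ^ a = y * (z ^ b * y ^ a) := by rw [mul_assoc]
  rw [e0, comm_mul_left]
  have e1 : ringComm (z ^ b * y ^ a) z = z ^ b * ringComm (y ^ a) z := by
    rw [comm_mul_left, comm_pow_self_left]
    simp
  rw [e1]
  cases a with
  | zero =>
    rw [pow_zero, comm_one_left]
    refine cgr_of_eq ?_
    simp [mul_assoc]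
  | succ f =>
    have h1 : Cgr (ringComm (y ^ (f+1)) z) ((f+1) • (y ^ f * ringComm y z)) := by
      have h := (comm_pow z y f).neg
      rw [← comm_antisymm] at h
      refine h.trans (cgr_of_eq ?_)
      rw [← smul_neg, ← mul_neg, ← comm_antisymm]
    have h2' : Cgr (y * (z ^ b * ringComm (y ^ (f+1)) z))
        ((f+1) • (y * (z ^ b * (y ^ f * ringComm y z)))) := by
      have := (h1.mul_left (z ^ b)).mul_left y
      refine this.trans (cgr_of_eq ?_)
      rw [mul_smul_comm, mul_smul_comm]
    have h3 : Cgr (y * (z ^ b * (y ^ f * ringComm y z)))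
        (ringComm y z * y ^ (f+1) * z ^ b) := by
      have hsw : Cgr (y * (z ^ b * (y ^ f * ringComm y z)))
          (ringComm y z * (y * z ^ b * y ^ f)) := by
        have := (isc_comm y z).swap (y * (z ^ b * y ^ f))
        refine (cgr_of_eq ?_).trans (this.trans (cgr_of_eq ?_)) <;> noncomm_ring
      refine hsw.trans ?_
      have ezy : z ^ b * y ^ f = y ^ f * z ^ b - ringComm (y ^ f) (z ^ b) := by
        unfold ringComm; noncomm_ring
      have e2 : ringComm y z * (y * z ^ b * y ^ f)
          = ringComm y z * y ^ (f+1) * z ^ b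
            - ringComm y z * y * ringComm (y ^ f) (z ^ b) * 1 := by
        rw [show (y * z ^ b * y ^ f) = y * (z ^ b * y ^ f) from by rw [mul_assoc], ezy, pow_succ']
        noncomm_ring
      rw [e2]
      have hk : ringComm y z * y * ringComm (y ^ f) (z ^ b) * 1 ∈ T3U k :=
        zPPk h2 y z y z y 1 (Or.inl rfl) (Or.inr rfl) f b
      have := (Cgr.refl (ringComm y z * y ^ (f+1) * z ^ b)).sub (cgr_of_mem hk)
      simpa using this
    have h4 := h2'.trans (Cgr.nsmul (f+1) h3)
    have hT2 : Cgr (ringComm y z * (z ^ b * y ^ (f+1))) (ringComm y z * y ^ (f+1) * z ^ b) := by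
      have ezz : z ^ b * y ^ (f+1) = y ^ (f+1) * z ^ b - ringComm (y ^ (f+1)) (z ^ b) := by
        unfold ringComm; noncomm_ring
      have e3 : ringComm y z * (z ^ b * y ^ (f+1))
          = ringComm y z * y ^ (f+1) * z ^ b
            - ringComm y z * 1 * ringComm (y ^ (f+1)) (z ^ b) * 1 := by
        rw [ezz]; noncomm_ring
      rw [e3]
      have hk := zPPk h2 y z y z 1 1 (Or.inl rfl) (Or.inr rfl) (f+1) b
      have := (Cgr.refl (ringComm y z * y ^ (f+1) * z ^ b)).sub (cgr_of_mem hk)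
      simpa using this
    have h6 := h4.add hT2
    refine h6.trans (cgr_of_eq ?_)
    rw [succ_nsmul (ringComm y z * y ^ (f+1) * z ^ b) (f+1)]

end St16

end Chunk4
section Chunk5

namespace St16

variable {k : Type*} [Field k]

def qunit (k : Type*) [Field k] (p y z : ℕ) : F k :=
  ringComm (X k y) (X k z) * X k y ^ (p-1) * X k z ^ (p-1)

theorem endProd_cons (e : (ℕ × ℕ) × (ℕ × ℕ)) (es : List ((ℕ × ℕ) × (ℕ × ℕ))) :
    endProd k (e :: es)
      = (ringComm (X k e.1.1) (X k e.2.1) * X k e.1.1 ^ e.1.2 * X k e.2.1 ^ e.2.2)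
        * endProd k es := by
  simp [endProd]

theorem isc_ppow_prod {p : ℕ} (hpk : (p : k) = 0) (cs : List (F k)) :
    IsC ((cs.map (· ^ p)).prod) := by
  induction cs with
  | nil => simpa using isc_one
  | cons c t ih =>
    rw [List.map_cons, List.prod_cons]
    exact (isc_pow_char hpk c).mul ih

theorem isc_comm_prod (gs : List (F k × F k)) :
    IsC ((gs.map (fun g => ringComm g.1 g.2)).prod) := by
  induction gs with
  | nil => simpa using isc_one
  | cons g t ih =>
    rw [List.map_cons, List.prod_cons]
    exact (isc_comm _ _).mul ih

theorem Wkill (h2 : (2 : k) ≠ 0) (Y Z a w₁ w₂ c : F k) (hc : c = Y ∨ c = Z) (n : ℕ) :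
    ringComm Y Z * w₁ * ringComm a (c ^ n) * w₂ ∈ T3U k := by
  cases n with
  | zero => rw [pow_zero, comm_one_right]; simpa using (T3U k).zero_mem
  | succ m =>
    have h := ((comm_pow a c m).mul_left (ringComm Y Z * w₁)).mul_right w₂
    refine h.mem ?_
    have e : ringComm Y Z * w₁ * ((m+1) • (c ^ m * ringComm a c)) * w₂
        = (m+1) • (ringComm Y Z * (w₁ * c ^ m) * ringComm a c * w₂) := by
      simp only [mul_smul_comm, smul_mul_assoc]
      congr 1
      noncomm_ring
    rw [e]
    refine nsmul_mem_T3U (pair_sandwich (isc_comm a c) ?_ _ _) _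
    rcases hc with rfl | rfl
    · exact kill_21 _ _ _
    · exact kill_22 h2 _ _ _

theorem isc_qunit (h2 : (2 : k) ≠ 0) (p y z : ℕ) : IsC (qunit k p y z) := by
  intro a
  rw [qunit]
  set Y := X k y with hY
  set Z := X k z with hZ
  have e : ringComm a (ringComm Y Z * Y ^ (p-1) * Z ^ (p-1))
      = ringComm a (ringComm Y Z) * Y ^ (p-1) * Z ^ (p-1)
        + (ringComm Y Z * 1 * ringComm a (Y ^ (p-1)) * Z ^ (p-1)
        + ringComm Y Z * Y ^ (p-1) * ringComm a (Z ^ (p-1)) * 1) := by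
    rw [comm_mul_right a (ringComm Y Z * Y ^ (p-1)) (Z ^ (p-1)),
      comm_mul_right a (ringComm Y Z) (Y ^ (p-1))]
    noncomm_ring
  rw [e]
  refine add_mem ?_ (add_mem ?_ ?_)
  · exact t3_mul_right (t3_mul_right (comm_comm_central a Y Z) _) _
  · exact Wkill h2 Y Z a 1 (Z ^ (p-1)) Y (Or.inl rfl) (p-1)
  · exact Wkill h2 Y Z a (Y ^ (p-1)) 1 Z (Or.inr rfl) (p-1)

theorem factor_reduce (h2 : (2 : k) ≠ 0) {p : ℕ} (hchar : ringChar k = p)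
    (y z b c : ℕ) :
    (∃ (μ : k) (u v : F k),
      Cgr (ringComm (X k y) (X k z) * X k y ^ b * X k z ^ c)
        ((X k y ^ (b / p)) ^ p * ((X k z ^ (c / p)) ^ p * (μ • ringComm u v))))
    ∨ (p ≠ 0 ∧
      Cgr (ringComm (X k y) (X k z) * X k y ^ b * X k z ^ c)
        ((X k y ^ (b / p)) ^ p * ((X k z ^ (c / p)) ^ p * qunit k p y z))) := by
  have hpk : (p : k) = 0 := (ringChar.spec k p).mpr (by rw [hchar])
  set Y := X k y with hY
  set Z := X k z with hZ
  have hYb : Y ^ b = (Y ^ (b / p)) ^ p * Y ^ (b % p) := by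
    rw [← pow_mul, ← pow_add]
    congr 1
    rw [Nat.mul_comm]
    exact (Nat.div_add_mod b p).symm
  have hZc : Z ^ c = (Z ^ (c / p)) ^ p * Z ^ (c % p) := by
    rw [← pow_mul, ← pow_add]
    congr 1
    rw [Nat.mul_comm]
    exact (Nat.div_add_mod c p).symm
  have hYp : IsC ((Y ^ (b / p)) ^ p) := isc_pow_char hpk _
  have hZp : IsC ((Z ^ (c / p)) ^ p) := isc_pow_char hpk _
  have step0 : Cgr (ringComm Y Z * Y ^ b * Z ^ c)
      ((Y ^ (b / p)) ^ p * ((Z ^ (c / p)) ^ p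
        * (ringComm Y Z * Y ^ (b % p) * Z ^ (c % p)))) := by
    have c0 : ringComm Y Z * Y ^ b * Z ^ c
        = ringComm Y Z * ((Y ^ (b/p)) ^ p * Y ^ (b%p)) * ((Z ^ (c/p)) ^ p * Z ^ (c%p)) := by
      rw [← hYb, ← hZc]
    have s1 := hYp.swap (ringComm Y Z)
    have s2 := hZp.swap (ringComm Y Z * Y ^ (b%p))
    have c1 : Cgr (ringComm Y Z * ((Y ^ (b/p)) ^ p * Y ^ (b%p)) * ((Z ^ (c/p)) ^ p * Z ^ (c%p)))
        ((Y ^ (b/p)) ^ p * (ringComm Y Z * Y ^ (b%p) * ((Z ^ (c/p)) ^ p * Z ^ (c%p)))) := by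
      have := s1.mul_right (Y ^ (b%p) * ((Z ^ (c/p)) ^ p * Z ^ (c%p)))
      refine (cgr_of_eq ?_).trans (this.trans (cgr_of_eq ?_)) <;> noncomm_ring
    have c2 : Cgr (ringComm Y Z * Y ^ (b%p) * ((Z ^ (c/p)) ^ p * Z ^ (c%p)))
        ((Z ^ (c/p)) ^ p * (ringComm Y Z * Y ^ (b%p) * Z ^ (c%p))) := by
      have := s2.mul_right (Z ^ (c%p))
      refine (cgr_of_eq ?_).trans (this.trans (cgr_of_eq ?_)) <;> noncomm_ring
    exact (cgr_of_eq c0).trans (c1.trans (c2.mul_left _))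
  by_cases hgc : ((c % p + 1 : ℕ) : k) = 0
  · by_cases hgb : ((b % p + 1 : ℕ) : k) = 0
    · right
      have hd1 : ringChar k ∣ (b % p + 1) := (ringChar.spec k _).mp hgb
      have hd2 : ringChar k ∣ (c % p + 1) := (ringChar.spec k _).mp hgc
      rw [hchar] at hd1 hd2
      have hpne : p ≠ 0 := by
        rintro rfl
        rw [Nat.zero_dvd] at hd1
        omega
      have hb1 : b % p = p - 1 := by
        have h1 : p ≤ b % p + 1 := Nat.le_of_dvd (Nat.succ_pos _) hd1
        have h2' : b % p < p := Nat.mod_lt _ (Nat.pos_of_ne_zero hpne)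
        omega
      have hc1 : c % p = p - 1 := by
        have h1 : p ≤ c % p + 1 := Nat.le_of_dvd (Nat.succ_pos _) hd2
        have h2' : c % p < p := Nat.mod_lt _ (Nat.pos_of_ne_zero hpne)
        omega
      refine ⟨hpne, ?_⟩
      rw [hb1, hc1] at step0
      unfold qunit
      exact step0
    · left
      have hg := goodB h2 Y Z (b % p) (c % p)
      have hg' : Cgr (ringComm (Y * Z ^ (c%p) * Y ^ (b%p)) Z)
          (((b % p + 1 : ℕ) : k) • (ringComm Y Z * Y ^ (b%p) * Z ^ (c%p))) := by
        refine hg.trans (cgr_of_eq ?_)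
        rw [Nat.cast_smul_eq_nsmul]
      have hU := cgr_smul_cancel hgb hg'
      exact ⟨_, _, _, step0.trans ((hU.mul_left _).mul_left _)⟩
  · left
    have hg := goodA h2 Y Z (b % p) (c % p)
    have hg' : Cgr (ringComm Y (Z * Y ^ (b%p) * Z ^ (c%p)))
        (((c % p + 1 : ℕ) : k) • (ringComm Y Z * Y ^ (b%p) * Z ^ (c%p))) := by
      refine hg.trans (cgr_of_eq ?_)
      rw [Nat.cast_smul_eq_nsmul]
    have hU := cgr_smul_cancel hgc hg'
    exact ⟨_, _, _, step0.trans ((hU.mul_left _).mul_left _)⟩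

end St16

end Chunk5
section Chunk6

namespace St16

variable {k : Type*} [Field k]

theorem ends_reduce (h2 : (2 : k) ≠ 0) {p : ℕ} (hchar : ringChar k = p)
    (es : List ((ℕ × ℕ) × (ℕ × ℕ))) :
    ∃ (μ : k) (cs : List (F k)) (gs : List (F k × F k)) (qs : List (ℕ × ℕ)),
      (qs ≠ [] → p ≠ 0) ∧ (gs = [] → qs = [] → es = []) ∧
      Cgr (endProd k es)
        (μ • ((cs.map (· ^ p)).prod *
          ((gs.map (fun g => ringComm g.1 g.2)).prod *
            (qs.map (fun q => qunit k p q.1 q.2)).prod))) := by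
  have hpk : (p : k) = 0 := (ringChar.spec k p).mpr (by rw [hchar])
  induction es with
  | nil =>
    refine ⟨1, [], [], [], fun h => absurd rfl h, fun _ _ => rfl, cgr_of_eq ?_⟩
    simp [endProd]
  | cons e es ih =>
    obtain ⟨μ, cs, gs, qs, hq, _hne, hcg⟩ := ih
    set C' := (cs.map (· ^ p)).prod with hC
    set G' := (gs.map (fun g => ringComm g.1 g.2)).prod with hG
    set Q' := (qs.map (fun q => qunit k p q.1 q.2)).prod with hQ
    have hC'c : IsC C' := isc_ppow_prod hpk cs
    have hG'c : IsC G' := isc_comm_prod gs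
    set fe := ringComm (X k e.1.1) (X k e.2.1) * X k e.1.1 ^ e.1.2 * X k e.2.1 ^ e.2.2
      with hfe
    have hbase : Cgr (endProd k (e :: es)) (μ • (fe * (C' * (G' * Q')))) := by
      rw [endProd_cons]
      refine (hcg.mul_left _).trans (cgr_of_eq ?_)
      rw [mul_smul_comm]
    set Yp := (X k e.1.1 ^ (e.1.2 / p)) ^ p with hYp
    set Zp := (X k e.2.1 ^ (e.2.2 / p)) ^ p with hZp
    rcases factor_reduce h2 hchar e.1.1 e.2.1 e.1.2 e.2.2 with ⟨ν, u, v, hgood⟩ | ⟨hpne, hbad⟩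
    · -- good factor
      refine ⟨μ * ν, X k e.1.1 ^ (e.1.2 / p) :: X k e.2.1 ^ (e.2.2 / p) :: cs,
        (u, v) :: gs, qs, hq, fun h => (List.cons_ne_nil _ _ h).elim, ?_⟩
      have htar : ((X k e.1.1 ^ (e.1.2/p) :: X k e.2.1 ^ (e.2.2/p) :: cs).map (· ^ p)).prod
          * ((((u,v) :: gs).map (fun g => ringComm g.1 g.2)).prod
            * (qs.map (fun q => qunit k p q.1 q.2)).prod)
          = (Yp * (Zp * C')) * ((ringComm u v * G') * Q') := by
        simp only [List.map_cons, List.prod_cons, ← hC, ← hG, ← hQ, ← hYp, ← hZp]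
      rw [htar]
      have h1 : Cgr (fe * (C' * (G' * Q')))
          ((Yp * (Zp * (ν • ringComm u v))) * (C' * (G' * Q'))) := hgood.mul_right _
      have h2' : (Yp * (Zp * (ν • ringComm u v))) * (C' * (G' * Q'))
          = ν • ((Yp * (Zp * ringComm u v)) * (C' * (G' * Q'))) := by
        simp only [mul_smul_comm, smul_mul_assoc]
      have h3 : Cgr ((Yp * (Zp * ringComm u v)) * (C' * (G' * Q')))
          ((Yp * (Zp * C')) * ((ringComm u v * G') * Q')) := by
        have sw := hC'c.swap (ringComm u v)
        have hmid := (sw.mul_left (Yp * Zp)).mul_right (G' * Q')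
        refine (cgr_of_eq ?_).trans (hmid.trans (cgr_of_eq ?_)) <;> noncomm_ring
      have hchain : Cgr (fe * (C' * (G' * Q')))
          (ν • ((Yp * (Zp * C')) * ((ringComm u v * G') * Q'))) :=
        h1.trans ((cgr_of_eq h2').trans (h3.smul ν))
      refine hbase.trans ((hchain.smul μ).trans (cgr_of_eq ?_))
      rw [smul_smul]
    · -- bad factor
      refine ⟨μ, X k e.1.1 ^ (e.1.2 / p) :: X k e.2.1 ^ (e.2.2 / p) :: cs,
        gs, (e.1.1, e.2.1) :: qs, fun _ => hpne,
        fun _ h => (List.cons_ne_nil _ _ h).elim, ?_⟩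
      set W := qunit k p e.1.1 e.2.1 with hW
      have htar : ((X k e.1.1 ^ (e.1.2/p) :: X k e.2.1 ^ (e.2.2/p) :: cs).map (· ^ p)).prod
          * ((gs.map (fun g => ringComm g.1 g.2)).prod
            * (((e.1.1, e.2.1) :: qs).map (fun q => qunit k p q.1 q.2)).prod)
          = (Yp * (Zp * C')) * (G' * (W * Q')) := by
        simp only [List.map_cons, List.prod_cons, ← hC, ← hG, ← hQ, ← hYp, ← hZp, ← hW]
      rw [htar]
      have h1 : Cgr (fe * (C' * (G' * Q')))
          ((Yp * (Zp * W)) * (C' * (G' * Q'))) := hbad.mul_right _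
      have h3 : Cgr ((Yp * (Zp * W)) * (C' * (G' * Q')))
          ((Yp * (Zp * C')) * (G' * (W * Q'))) := by
        have sw1 := hC'c.swap W
        have t1 := (sw1.mul_left (Yp * Zp)).mul_right (G' * Q')
        have sw2 := hG'c.swap W
        have t2 := (sw2.mul_left (Yp * Zp * C')).mul_right Q'
        refine (cgr_of_eq ?_).trans (t1.trans ((cgr_of_eq ?_).trans
          (t2.trans (cgr_of_eq ?_)))) <;> noncomm_ring
      refine hbase.trans (((h1.trans h3).smul μ).trans (Cgr.refl _))
end St16

end Chunk6
section Chunk7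

namespace St16

variable {k : Type*} [Field k]

theorem isc_qunit_prod (h2 : (2 : k) ≠ 0) (p : ℕ) (qs : List (ℕ × ℕ)) :
    IsC ((qs.map (fun q => qunit k p q.1 q.2)).prod) := by
  induction qs with
  | nil => simpa using isc_one
  | cons q t ih =>
    rw [List.map_cons, List.prod_cons]
    exact (isc_qunit h2 p q.1 q.2).mul ih

theorem map_getD_range {α β : Type*} [Inhabited α] (l : List α) (f : α → β) :
    l.map f = (List.range l.length).map (fun i => f (l.getD i default)) := by
  induction l with
  | nil => simp
  | cons a t ih =>
    rw [List.length_cons, List.range_succ_eq_map, List.map_cons, List.map_cons, List.map_map]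
    congr 1

def chainSig (k : Type*) [Field k] (u0 : F k) (l : List (ℕ × ℕ)) : ℕ → F k := fun n =>
  if n = 0 then u0
  else if n % 2 = 1 then X k ((l.getD ((n-1)/2) default).1)
  else X k ((l.getD (n/2 - 1) default).2)

theorem chainSig_zero (u0 : F k) (l : List (ℕ × ℕ)) : chainSig k u0 l 0 = u0 := by
  unfold chainSig
  rw [if_pos rfl]

theorem chainSig_odd (u0 : F k) (l : List (ℕ × ℕ)) (i : ℕ) :
    chainSig k u0 l (2*i+1) = X k ((l.getD i default).1) := by
  unfold chainSig
  rw [if_neg (show ¬(2*i+1 = 0) by omega), if_pos (show (2*i+1) % 2 = 1 by omega)]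
  have he : (2*i+1-1)/2 = i := by omega
  rw [he]

theorem chainSig_even (u0 : F k) (l : List (ℕ × ℕ)) (i : ℕ) :
    chainSig k u0 l (2*i+2) = X k ((l.getD i default).2) := by
  unfold chainSig
  rw [if_neg (show ¬(2*i+2 = 0) by omega), if_neg (show ¬((2*i+2) % 2 = 1) by omega)]
  have he : (2*i+2)/2 - 1 = i := by omega
  rw [he]

theorem prod_ppow {p : ℕ} (bs : List (ℕ × ℕ)) (hdiv : ∀ q ∈ bs, p ∣ q.2) :
    (bs.map (fun q => X k q.1 ^ q.2)).prod
      = ((bs.map (fun q => X k q.1 ^ (q.2 / p))).map (· ^ p)).prod := by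
  induction bs with
  | nil => simp
  | cons q t ih =>
    have hq := hdiv q (List.mem_cons_self)
    have ht : ∀ r ∈ t, p ∣ r.2 := fun r hr => hdiv r (List.mem_cons_of_mem q hr)
    rw [List.map_cons, List.prod_cons, List.map_cons, List.map_cons, List.prod_cons,
      ih ht]
    congr 1
    rw [← pow_mul, Nat.div_mul_cancel hq]

theorem ph4 (h2 : (2 : k) ≠ 0) {p : ℕ} (hchar : ringChar k = p)
    (hodd : p ≠ 0 → p % 2 = 1)
    (bs : List (ℕ × ℕ)) (es : List ((ℕ × ℕ) × (ℕ × ℕ)))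
    (hdiv : ∀ q ∈ bs, p ∣ q.2) (hp0 : p = 0 → bs = [])
    (hne : bs ≠ [] ∨ es ≠ []) :
    begProd k bs * endProd k es ∈ NN k p := by
  have hpk : (p : k) = 0 := (ringChar.spec k p).mpr (by rw [hchar])
  obtain ⟨μ, cs, gs, qs, hq, hnee, hcg⟩ := ends_reduce h2 hchar es
  have hbeg : begProd k bs
      = ((bs.map (fun q => X k q.1 ^ (q.2 / p))).map (· ^ p)).prod := by
    rw [begProd]; exact prod_ppow bs hdiv
  have htot : Cgr (begProd k bs * endProd k es)
      (μ • ((((bs.map (fun q => X k q.1 ^ (q.2 / p))) ++ cs).map (· ^ p)).prod *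
        ((gs.map (fun g => ringComm g.1 g.2)).prod *
          (qs.map (fun q => qunit k p q.1 q.2)).prod))) := by
    have h1 := hcg.mul_left (begProd k bs)
    refine h1.trans (cgr_of_eq ?_)
    rw [mul_smul_comm, hbeg, List.map_append, List.prod_append, mul_assoc]
  set us := bs.map (fun q => X k q.1 ^ (q.2 / p)) with hus
  set AP := ((us ++ cs).map (· ^ p)).prod with hAP
  cases gs with
  | cons g gs' =>
    simp only [List.map_cons, List.prod_cons] at htot
    set G2 := (gs'.map (fun g => ringComm g.1 g.2)).prod with hG2
    set Q' := (qs.map (fun q => qunit k p q.1 q.2)).prod with hQ'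
    have hcfull : IsC (AP * (G2 * Q')) :=
      (isc_ppow_prod hpk _).mul ((isc_comm_prod gs').mul (isc_qunit_prod h2 p qs))
    have hX : Cgr (AP * ((ringComm g.1 g.2 * G2) * Q'))
        (ringComm g.1 g.2 * (AP * (G2 * Q'))) := by
      have sw := (isc_comm g.1 g.2).swap AP
      have hmid := sw.mul_right (G2 * Q')
      refine (cgr_of_eq ?_).trans (hmid.trans (cgr_of_eq ?_)) <;> noncomm_ring
    have habs : Cgr (ringComm g.1 g.2 * (AP * (G2 * Q')))
        (ringComm g.1 (g.2 * (AP * (G2 * Q')))) := comm_absorb hcfull g.1 g.2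
    have hS1 : ringComm g.1 (g.2 * (AP * (G2 * Q'))) ∈ S1space k p := comm_mem_S1 p _ _
    have hchain := htot.trans ((hX.trans habs).smul μ)
    exact Cgr.memNN_smul μ hchain (s1_le_NN p hS1)
  | nil =>
    simp only [List.map_nil, List.prod_nil, one_mul] at htot
    cases qs with
    | nil =>
      have hes : es = [] := hnee rfl rfl
      have hbs : bs ≠ [] := by
        rcases hne with h | h
        · exact h
        · exact absurd hes h
      have hpne : p ≠ 0 := fun h => hbs (hp0 h)
      simp only [List.map_nil, List.prod_nil, mul_one] at htot
      have hfr : Cgr AP ((us ++ cs).prod ^ p) := frob_list h2 hpk (hodd hpne) (us ++ cs)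
      have hchain := htot.trans (hfr.smul μ)
      exact Cgr.memNN_smul μ hchain (s1_le_NN p (pow_mem_S1 hpne _))
    | cons q qs' =>
      have hpne : p ≠ 0 := hq (List.cons_ne_nil _ _)
      have hfr : Cgr AP ((us ++ cs).prod ^ p) := frob_list h2 hpk (hodd hpne) (us ++ cs)
      set u0 := (us ++ cs).prod with hu0
      set qsl := q :: qs' with hqsl
      set σ : ℕ → F k := chainSig k u0 qsl with hσ
      have hσmem := chain_mem_S1 (k := k) hpne σ (m := qsl.length)
        (by rw [hqsl, List.length_cons]; omega)
      have h0 : σ 0 = u0 := chainSig_zero u0 qsl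
      have h1 : ∀ i : ℕ, σ (2*i+1) = X k ((qsl.getD i default).1) :=
        fun i => chainSig_odd u0 qsl i
      have h2i : ∀ i : ℕ, σ (2*i+2) = X k ((qsl.getD i default).2) :=
        fun i => chainSig_even u0 qsl i
      have hid : σ 0 ^ p * ((List.range qsl.length).map (fun i =>
          ringComm (σ (2*i+1)) (σ (2*i+2)) * σ (2*i+1) ^ (p-1) * σ (2*i+2) ^ (p-1))).prod
          = u0 ^ p * (qsl.map (fun q => qunit k p q.1 q.2)).prod := by
        rw [h0]
        congr 1
        rw [map_getD_range qsl (fun q => qunit k p q.1 q.2)]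
        congr 1
        apply List.map_congr_left
        intro i _
        rw [h1 i, h2i i]
        rfl
      rw [hid] at hσmem
      have hchain := htot.trans ((hfr.mul_right _).smul μ)
      exact Cgr.memNN_smul μ hchain (s1_le_NN p hσmem)

end St16

end Chunk7
section Chunk8

namespace St16

variable {k : Type*} [Field k]

def flat : List (ℕ × ℕ) → List ℕ
  | [] => []
  | g :: t => g.1 :: g.2 :: flat t

@[simp] theorem flat_nil : flat ([] : List (ℕ × ℕ)) = [] := rfl

@[simp] theorem flat_cons (g : ℕ × ℕ) (t : List (ℕ × ℕ)) :
    flat (g :: t) = g.1 :: g.2 :: flat t := rfl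

theorem flat_append (l₁ l₂ : List (ℕ × ℕ)) : flat (l₁ ++ l₂) = flat l₁ ++ flat l₂ := by
  induction l₁ with
  | nil => simp
  | cons g t ih => simp [ih]

theorem flat_perm_pull (γ₁ : List (ℕ × ℕ)) (g : ℕ × ℕ) (γ₂ : List (ℕ × ℕ)) :
    (flat (γ₁ ++ g :: γ₂)).Perm (g.1 :: g.2 :: flat (γ₁ ++ γ₂)) := by
  rw [flat_append, flat_append, flat_cons]
  exact List.Perm.trans List.perm_middle (List.Perm.cons _ List.perm_middle)

theorem mem_flat_split {v : ℕ} : ∀ {γ : List (ℕ × ℕ)}, v ∈ flat γ →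
    ∃ γ₁ g γ₂, γ = γ₁ ++ g :: γ₂ ∧ (v = g.1 ∨ v = g.2) := by
  intro γ
  induction γ with
  | nil => intro h; simp at h
  | cons g t ih =>
    intro h
    rw [flat_cons] at h
    simp only [List.mem_cons] at h
    rcases h with h | h | h
    · exact ⟨[], g, t, rfl, Or.inl h⟩
    · exact ⟨[], g, t, rfl, Or.inr h⟩
    · obtain ⟨γ₁, g', γ₂, rfl, hg⟩ := ih h
      exact ⟨g :: γ₁, g', γ₂, rfl, hg⟩

theorem cP_pull (γ₁ : List (ℕ × ℕ)) (g : ℕ × ℕ) (γ₂ : List (ℕ × ℕ)) :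
    Cgr (cP k (γ₁ ++ g :: γ₂))
      (ringComm (X k g.1) (X k g.2) * cP k (γ₁ ++ γ₂)) := by
  rw [cP_append, cP_cons, cP_append]
  have sw := (isc_comm (X k g.1) (X k g.2)).swap (cP k γ₁)
  refine (cgr_of_eq ?_).trans ((sw.mul_right (cP k γ₂)).trans (cgr_of_eq ?_)) <;>
    noncomm_ring

theorem share_kill (h2 : (2 : k) ≠ 0) (A B C D : F k)
    (h : A = C ∨ A = D ∨ B = C ∨ B = D) :
    ringComm A B * ringComm C D ∈ T3U k := by
  rcases h with rfl | rfl | rfl | rfl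
  · exact kill_11 h2 _ _ _
  · exact kill_21 _ _ _
  · exact kill_12 _ _ _
  · exact kill_22 h2 _ _ _

theorem killG (h2 : (2 : k) ≠ 0) :
    ∀ (γ : List (ℕ × ℕ)), ¬ (flat γ).Nodup → ∀ a : F k, a * cP k γ ∈ T3U k := by
  intro γ
  induction γ with
  | nil => intro h; simp at h
  | cons g t ih =>
    intro h a
    rw [flat_cons] at h
    by_cases hxy : g.1 = g.2
    · have : ringComm (X k g.1) (X k g.2) = 0 := by rw [hxy, comm_self]
      rw [cP_cons, this, zero_mul, mul_zero]
      exact (T3U k).zero_mem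
    · by_cases hx : g.1 ∈ flat t
      · obtain ⟨t₁, g', t₂, rfl, hg⟩ := mem_flat_split hx
        have hshare : ringComm (X k g.1) (X k g.2) * ringComm (X k g'.1) (X k g'.2) ∈ T3U k := by
          refine share_kill h2 _ _ _ _ ?_
          rcases hg with h' | h'
          · exact Or.inl (by rw [h'])
          · exact Or.inr (Or.inl (by rw [h']))
        have hpull := ((cP_pull t₁ g' t₂).mul_left
          (ringComm (X k g.1) (X k g.2))).mul_left a
        rw [cP_cons]
        refine hpull.mem ?_
        have e : a * (ringComm (X k g.1) (X k g.2) *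
            (ringComm (X k g'.1) (X k g'.2) * cP k (t₁ ++ t₂)))
            = a * ((ringComm (X k g.1) (X k g.2) * ringComm (X k g'.1) (X k g'.2))
              * cP k (t₁ ++ t₂)) := by noncomm_ring
        rw [e]
        exact t3_mul_left (t3_mul_right hshare _) a
      · by_cases hy : g.2 ∈ flat t
        · obtain ⟨t₁, g', t₂, rfl, hg⟩ := mem_flat_split hy
          have hshare : ringComm (X k g.1) (X k g.2) * ringComm (X k g'.1) (X k g'.2) ∈ T3U k := by
            refine share_kill h2 _ _ _ _ ?_
            rcases hg with h' | h'
            · exact Or.inr (Or.inr (Or.inl (by rw [h'])))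
            · exact Or.inr (Or.inr (Or.inr (by rw [h'])))
          have hpull := ((cP_pull t₁ g' t₂).mul_left
            (ringComm (X k g.1) (X k g.2))).mul_left a
          rw [cP_cons]
          refine hpull.mem ?_
          have e : a * (ringComm (X k g.1) (X k g.2) *
              (ringComm (X k g'.1) (X k g'.2) * cP k (t₁ ++ t₂)))
              = a * ((ringComm (X k g.1) (X k g.2) * ringComm (X k g'.1) (X k g'.2))
                * cP k (t₁ ++ t₂)) := by noncomm_ring
          rw [e]
          exact t3_mul_left (t3_mul_right hshare _) a
        · have hnt : ¬ (flat t).Nodup := by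
            intro hnd
            apply h
            simp [List.nodup_cons, hxy, hx, hy, hnd]
          rw [cP_cons, ← mul_assoc]
          exact ih hnt _

theorem exists_min {L : List ℕ} (h : L ≠ []) : ∃ v ∈ L, ∀ x ∈ L, v ≤ x := by
  induction L with
  | nil => exact absurd rfl h
  | cons a t ih =>
    cases t with
    | nil => exact ⟨a, List.mem_singleton_self a, by simp⟩
    | cons b t' =>
      obtain ⟨v, hv, hmin⟩ := ih (List.cons_ne_nil _ _)
      by_cases hav : a ≤ v
      · refine ⟨a, List.mem_cons_self, ?_⟩
        intro x hx
        rcases List.mem_cons.mp hx with rfl | hx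
        · exact le_refl x
        · exact le_trans hav (hmin x hx)
      · refine ⟨v, List.mem_cons_of_mem _ hv, ?_⟩
        intro x hx
        rcases List.mem_cons.mp hx with rfl | hx
        · omega
        · exact hmin x hx

theorem idI_cgr (a b c d : F k) :
    Cgr (ringComm a b * ringComm c d) (-(ringComm c b * ringComm a d)) := by
  show _ - _ ∈ _
  rw [sub_neg_eq_add]
  exact idI a b c d

/-- re-pairing move: `[v,x][w,y] ≋ -[v,w][x,y]` -/
theorem repair (v x w y : F k) :
    Cgr (ringComm v x * ringComm w y) (-(ringComm v w * ringComm x y)) := by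
  have h1 : ringComm v x * ringComm w y = -(ringComm x v * ringComm w y) := by
    rw [comm_antisymm v x]; noncomm_ring
  rw [h1]
  have h2 := (idI_cgr x v w y).neg
  refine h2.trans (cgr_of_eq ?_)
  rw [neg_neg, comm_antisymm w v]
  noncomm_ring

theorem pull_orient (γ₁ : List (ℕ × ℕ)) (g : ℕ × ℕ) (γ₂ : List (ℕ × ℕ)) {v : ℕ}
    (hv : v = g.1 ∨ v = g.2) :
    ∃ (ε : k) (x : ℕ),
      Cgr (cP k (γ₁ ++ g :: γ₂)) (ε • (ringComm (X k v) (X k x) * cP k (γ₁ ++ γ₂)))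
      ∧ (v :: x :: flat (γ₁ ++ γ₂)).Perm (flat (γ₁ ++ g :: γ₂)) := by
  have hpull := cP_pull (k := k) γ₁ g γ₂
  have hperm := flat_perm_pull γ₁ g γ₂
  rcases hv with rfl | rfl
  · refine ⟨1, g.2, ?_, ?_⟩
    · refine hpull.trans (cgr_of_eq ?_)
      rw [one_smul]
    · exact hperm.symm
  · refine ⟨-1, g.1, ?_, ?_⟩
    · refine hpull.trans (cgr_of_eq ?_)
      rw [comm_antisymm (X k g.1) (X k g.2), neg_mul, neg_smul, one_smul]
    · exact (List.Perm.swap _ _ _).trans hperm.symm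

end St16

end Chunk8
section Chunk9

namespace St16

variable {k : Type*} [Field k]

theorem chain'_cons_all {a : ℕ} {l : List ℕ} (h : ∀ b ∈ l, a < b)
    (hc : List.Chain' (· < ·) l) : List.Chain' (· < ·) (a :: l) := by
  cases l with
  | nil => simp [List.Chain']
  | cons b t =>
    rw [List.Chain', List.isChain_cons_cons]
    exact ⟨h b (List.mem_cons_self), hc⟩

theorem sortG (h2 : (2 : k) ≠ 0) : ∀ (n : ℕ) (γ : List (ℕ × ℕ)), γ.length ≤ n →
    (flat γ).Nodup →
    ∃ (ε : k) (t : List (ℕ × ℕ)), (flat t).Perm (flat γ) ∧ List.Chain' (· < ·) (flat t)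
      ∧ Cgr (cP k γ) (ε • cP k t) := by
  intro n
  induction n with
  | zero =>
    intro γ hlen _
    have hγ : γ = [] := List.length_eq_zero_iff.mp (Nat.le_zero.mp hlen)
    subst hγ
    exact ⟨1, [], by simp, by simp [List.Chain'], cgr_of_eq (by simp)⟩
  | succ n ih =>
    intro γ hlen hnd
    cases γ with
    | nil => exact ⟨1, [], by simp, by simp [List.Chain'], cgr_of_eq (by simp)⟩
    | cons g0 rest =>
      have hfne : flat (g0 :: rest) ≠ [] := by simp
      obtain ⟨v, hvmem, hvmin⟩ := exists_min hfne
      obtain ⟨γ₁, g, γ₂, heq, hvg⟩ := mem_flat_split hvmem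
      obtain ⟨ε₀, x, hc0, hp0⟩ := pull_orient (k := k) γ₁ g γ₂ hvg
      rw [← heq] at hp0
      -- hp0 : (v :: x :: flat (γ₁ ++ γ₂)).Perm (flat (g0 :: rest))
      have hnd0 : (v :: x :: flat (γ₁ ++ γ₂)).Nodup := hp0.nodup_iff.mpr hnd
      have hvnotin : v ∉ x :: flat (γ₁ ++ γ₂) := (List.nodup_cons.mp hnd0).1
      have hnd1 : (x :: flat (γ₁ ++ γ₂)).Nodup := (List.nodup_cons.mp hnd0).2
      have hxδ : x ∉ flat (γ₁ ++ γ₂) := (List.nodup_cons.mp hnd1).1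
      have hndδ : (flat (γ₁ ++ γ₂)).Nodup := (List.nodup_cons.mp hnd1).2
      have hvall : ∀ u ∈ x :: flat (γ₁ ++ γ₂), v ≤ u := fun u hu =>
        hvmin u (hp0.subset (List.mem_cons_of_mem v hu))
      have hlenδ : (γ₁ ++ γ₂).length ≤ n := by
        have h1 := congrArg List.length heq
        simp only [List.length_cons, List.length_append] at h1 hlen ⊢
        omega
      obtain ⟨w, hwmem, hwmin⟩ := exists_min (List.cons_ne_nil x (flat (γ₁ ++ γ₂)))
      have hvw : v < w := by
        have h1 : v ≤ w := hvall w hwmem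
        have h2' : v ≠ w := fun h => hvnotin (h ▸ hwmem)
        omega
      by_cases hwx : w = x
      · -- head factor becomes (v, x), recurse on γ₁ ++ γ₂
        obtain ⟨ε', t', hperm', hchain', hcgr'⟩ := ih (γ₁ ++ γ₂) hlenδ hndδ
        refine ⟨ε₀ * ε', (v, x) :: t', ?_, ?_, ?_⟩
        · rw [flat_cons]
          exact ((hperm'.cons x).cons v).trans hp0
        · rw [flat_cons]
          rw [List.Chain', List.isChain_cons_cons]
          constructor
          · rw [← hwx]; exact hvw
          · refine chain'_cons_all ?_ hchain'
            intro b hb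
            have hbδ : b ∈ flat (γ₁ ++ γ₂) := hperm'.subset hb
            have h1 : w ≤ b := hwmin b (List.mem_cons_of_mem x hbδ)
            have h2' : b ≠ x := fun h => hxδ (h ▸ hbδ)
            rw [hwx] at h1
            omega
        · have h1 := (hcgr'.mul_left (ringComm (X k v) (X k x))).smul ε₀
          refine (cgr_of_eq (by rw [heq])).trans (hc0.trans (h1.trans (cgr_of_eq ?_)))
          rw [cP_cons, mul_smul_comm, smul_smul]
      · -- w lies in γ₁ ++ γ₂ : re-pair
        have hwδ : w ∈ flat (γ₁ ++ γ₂) := by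
          rcases List.mem_cons.mp hwmem with h | h
          · exact absurd h hwx
          · exact h
        obtain ⟨δ₁, g', δ₂, heqδ, hwg⟩ := mem_flat_split hwδ
        obtain ⟨ε₁, y, hc1, hp1⟩ := pull_orient (k := k) δ₁ g' δ₂ hwg
        rw [← heqδ] at hp1
        -- hp1 : (w :: y :: flat (δ₁ ++ δ₂)).Perm (flat (γ₁ ++ γ₂))
        have hndw : (w :: y :: flat (δ₁ ++ δ₂)).Nodup := hp1.nodup_iff.mpr hndδ
        have hlen' : ((x, y) :: (δ₁ ++ δ₂)).length ≤ n := by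
          have h1 := congrArg List.length heqδ
          simp only [List.length_cons, List.length_append] at h1 hlenδ ⊢
          omega
        have hnd' : (flat ((x, y) :: (δ₁ ++ δ₂))).Nodup := by
          rw [flat_cons]
          have hyδ' : y ∉ flat (δ₁ ++ δ₂) := (List.nodup_cons.mp (List.nodup_cons.mp hndw).2).1
          have hndδ' : (flat (δ₁ ++ δ₂)).Nodup := (List.nodup_cons.mp (List.nodup_cons.mp hndw).2).2
          have hxy' : x ∉ y :: flat (δ₁ ++ δ₂) := by
            intro hx
            apply hxδ
            exact hp1.subset (List.mem_cons_of_mem w hx)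
          exact List.nodup_cons.mpr ⟨hxy', List.nodup_cons.mpr ⟨hyδ', hndδ'⟩⟩
        obtain ⟨ε', t', hperm', hchain', hcgr'⟩ := ih ((x, y) :: (δ₁ ++ δ₂)) hlen' hnd'
        refine ⟨-(ε₀ * ε₁ * ε'), (v, w) :: t', ?_, ?_, ?_⟩
        · -- permutation
          rw [flat_cons]
          have p1 : (flat t').Perm (x :: y :: flat (δ₁ ++ δ₂)) := by
            have := hperm'; rwa [flat_cons] at this
          have p2 : (w :: flat t').Perm (w :: x :: y :: flat (δ₁ ++ δ₂)) := p1.cons w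
          have p3 : (w :: x :: y :: flat (δ₁ ++ δ₂)).Perm
              (x :: w :: y :: flat (δ₁ ++ δ₂)) := List.Perm.swap x w _
          have p4 : (x :: w :: y :: flat (δ₁ ++ δ₂)).Perm (x :: flat (γ₁ ++ γ₂)) :=
            hp1.cons x
          have p5 : (v :: x :: flat (γ₁ ++ γ₂)).Perm (flat (g0 :: rest)) := hp0
          exact (((p2.trans p3).trans p4).cons v).trans p5
        · -- chain
          rw [flat_cons, List.Chain', List.isChain_cons_cons]
          refine ⟨hvw, ?_⟩
          refine chain'_cons_all ?_ hchain'
          intro b hb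
          have hb' : b ∈ x :: y :: flat (δ₁ ++ δ₂) := by
            have := hperm'.subset hb; rwa [flat_cons] at this
          have hbmem : b ∈ x :: flat (γ₁ ++ γ₂) := by
            rcases List.mem_cons.mp hb' with h | h
            · exact h ▸ List.mem_cons_self
            · exact List.mem_cons_of_mem x (hp1.subset (List.mem_cons_of_mem w h))
          have h1 : w ≤ b := hwmin b hbmem
          have h2' : b ≠ w := by
            intro h
            subst h
            rcases List.mem_cons.mp hb' with h | h
            · exact hwx h
            · exact (List.nodup_cons.mp hndw).1 h
          omega
        · -- congruence
          have hrep : Cgr (ringComm (X k v) (X k x) * ringComm (X k w) (X k y))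
              (-(ringComm (X k v) (X k w) * ringComm (X k x) (X k y))) :=
            repair _ _ _ _
          -- cP γ ≋ ε₀ • (Cvx * cP (γ₁++γ₂)) ≋ ε₀ • (Cvx * (ε₁ • (Cwy * cP (δ₁++δ₂))))
          have s1 : Cgr (cP k (g0 :: rest))
              (ε₀ • (ringComm (X k v) (X k x) * cP k (γ₁ ++ γ₂))) :=
            (cgr_of_eq (by rw [heq])).trans hc0
          have s2 : Cgr (ringComm (X k v) (X k x) * cP k (γ₁ ++ γ₂))
              (ε₁ • (ringComm (X k v) (X k x) *
                (ringComm (X k w) (X k y) * cP k (δ₁ ++ δ₂)))) := by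
            have := hc1.mul_left (ringComm (X k v) (X k x))
            refine ((cgr_of_eq (by rw [heqδ])).trans this).trans (cgr_of_eq ?_)
            rw [mul_smul_comm]
          have s3 : Cgr (ringComm (X k v) (X k x) *
                (ringComm (X k w) (X k y) * cP k (δ₁ ++ δ₂)))
              (-(ringComm (X k v) (X k w) * cP k ((x, y) :: (δ₁ ++ δ₂)))) := by
            have := hrep.mul_right (cP k (δ₁ ++ δ₂))
            refine (cgr_of_eq ?_).trans (this.trans (cgr_of_eq ?_))
            · noncomm_ring
            · rw [cP_cons]; noncomm_ring
          have s4 : Cgr (cP k ((x, y) :: (δ₁ ++ δ₂))) (ε' • cP k t') := hcgr'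
          -- combine
          have s5 : Cgr (ringComm (X k v) (X k x) *
                (ringComm (X k w) (X k y) * cP k (δ₁ ++ δ₂)))
              (-(ε' • (ringComm (X k v) (X k w) * cP k t'))) := by
            refine s3.trans ?_
            have := (s4.mul_left (ringComm (X k v) (X k w))).neg
            refine this.trans (cgr_of_eq ?_)
            rw [mul_smul_comm]
          have s6 := s2.trans ((s5.smul ε₁))
          have s7 := s1.trans (s6.smul ε₀)
          refine s7.trans (cgr_of_eq ?_)
          rw [cP_cons, smul_neg, smul_neg, smul_smul, smul_smul, neg_smul, mul_assoc]

end St16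

end Chunk9
section Chunk10

namespace St16

variable {k : Type*} [Field k]

theorem kill_with_gamma (h2 : (2 : k) ≠ 0) {v : ℕ} {γ : List (ℕ × ℕ)}
    (hv : v ∈ flat γ) (j : ℕ) (a b : F k) :
    a * ringComm (X k v) (X k j) * b * cP k γ ∈ T3U k := by
  obtain ⟨γ₁, g, γ₂, rfl, hvg⟩ := mem_flat_split hv
  have hpull := (cP_pull (k := k) γ₁ g γ₂).mul_left (a * ringComm (X k v) (X k j) * b)
  refine hpull.mem ?_
  have hshare : ringComm (X k v) (X k j) * ringComm (X k g.1) (X k g.2) ∈ T3U k := by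
    refine share_kill h2 _ _ _ _ ?_
    rcases hvg with h | h
    · exact Or.inl (by rw [h])
    · exact Or.inr (Or.inl (by rw [h]))
  have hsw := (isc_comm (X k g.1) (X k g.2)).swap b
  have hcg : Cgr (a * ringComm (X k v) (X k j) * b *
      (ringComm (X k g.1) (X k g.2) * cP k (γ₁ ++ γ₂)))
      (a * (ringComm (X k v) (X k j) * ringComm (X k g.1) (X k g.2))
        * (b * cP k (γ₁ ++ γ₂))) := by
    have := (hsw.mul_left (a * ringComm (X k v) (X k j))).mul_right (cP k (γ₁ ++ γ₂))
    refine (cgr_of_eq ?_).trans (this.trans (cgr_of_eq ?_)) <;> noncomm_ring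
  exact hcg.mem (t3_mul_right (t3_mul_left hshare a) _)

theorem move1 (h2 : (2 : k) ≠ 0) {v : ℕ} {γ : List (ℕ × ℕ)} (hv : v ∈ flat γ) :
    ∀ (t : List ℕ) (w c : F k),
      Cgr (w * X k v * wrd k t * (c * cP k γ)) (w * wrd k t * X k v * (c * cP k γ)) := by
  intro t
  induction t with
  | nil => intro w c; exact cgr_of_eq (by simp)
  | cons a t ih =>
    intro w c
    have hsplit : X k v * X k a = X k a * X k v + ringComm (X k v) (X k a) := by
      unfold ringComm; noncomm_ring
    have e1 : w * X k v * wrd k (a :: t) * (c * cP k γ)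
        = (w * X k a) * X k v * wrd k t * (c * cP k γ)
          + (w * ringComm (X k v) (X k a) * (wrd k t * c)) * cP k γ := by
      rw [wrd_cons]
      have : w * X k v * (X k a * wrd k t) * (c * cP k γ)
          = w * (X k v * X k a) * wrd k t * (c * cP k γ) := by noncomm_ring
      rw [this, hsplit]
      noncomm_ring
    rw [e1]
    have hB : (w * ringComm (X k v) (X k a) * (wrd k t * c)) * cP k γ ∈ T3U k :=
      kill_with_gamma h2 hv a w (wrd k t * c)
    have hA := ih (w * X k a) c
    have hcomb := hA.add (cgr_of_mem hB)
    refine hcomb.trans (cgr_of_eq ?_)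
    rw [add_zero, wrd_cons]
    noncomm_ring

theorem extract_one (h2 : (2 : k) ≠ 0) {v : ℕ} {γ : List (ℕ × ℕ)} (hv : v ∈ flat γ) :
    ∀ (l : List ℕ) (c : F k),
      Cgr (wrd k l * (c * cP k γ))
        (wrd k (l.filter (· ≠ v)) * (X k v ^ (l.count v) * (c * cP k γ))) := by
  intro l
  induction l with
  | nil => intro c; exact cgr_of_eq (by simp)
  | cons a l ih =>
    intro c
    by_cases hav : a = v
    · subst hav
      -- move the leading X a to the right past wrd l
      have hmv := move1 h2 hv l 1 c
      have e1 : wrd k (a :: l) * (c * cP k γ) = 1 * X k a * wrd k l * (c * cP k γ) := by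
        rw [wrd_cons]; noncomm_ring
      have e2 : 1 * wrd k l * X k a * (c * cP k γ)
          = wrd k l * ((X k a * c) * cP k γ) := by noncomm_ring
      have step := (cgr_of_eq e1).trans (hmv.trans (cgr_of_eq e2))
      refine step.trans ((ih (X k a * c)).trans (cgr_of_eq ?_))
      have hfil : (a :: l).filter (· ≠ a) = l.filter (· ≠ a) := by
        simp [List.filter_cons]
      have hcnt : (a :: l).count a = l.count a + 1 := by
        simp [List.count_cons]
      rw [hfil, hcnt, pow_succ]
      noncomm_ring
    · have hfil : (a :: l).filter (· ≠ v) = a :: l.filter (· ≠ v) := by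
        simp [List.filter_cons, hav]
      have hcnt : (a :: l).count v = l.count v := by
        simp [List.count_cons, hav]
      rw [hfil, hcnt, wrd_cons, wrd_cons]
      have := (ih c).mul_left (X k a)
      refine (cgr_of_eq ?_).trans (this.trans (cgr_of_eq ?_)) <;> noncomm_ring

theorem extract_many (h2 : (2 : k) ≠ 0) {γ : List (ℕ × ℕ)} :
    ∀ (vs : List ℕ), vs.Nodup → (∀ v ∈ vs, v ∈ flat γ) → ∀ (l : List ℕ) (c : F k),
      Cgr (wrd k l * (c * cP k γ))
        (wrd k (l.filter (fun a => a ∉ vs)) *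
          ((vs.map (fun v => X k v ^ (l.count v))).prod * (c * cP k γ))) := by
  intro vs
  induction vs with
  | nil =>
    intro _ _ l c
    refine cgr_of_eq ?_
    simp
  | cons v vs ih =>
    intro hnd hmem l c
    have hvnotvs : v ∉ vs := (List.nodup_cons.mp hnd).1
    have h1 := ih (List.nodup_cons.mp hnd).2 (fun u hu => hmem u (List.mem_cons_of_mem v hu)) l c
    -- now extract v from the filtered word
    set l' := l.filter (fun a => a ∉ vs) with hl'
    have h2' := extract_one h2 (hmem v (List.mem_cons_self)) l'
      ((vs.map (fun u => X k u ^ (l.count u))).prod * c)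
    -- identifications
    have hfil : l'.filter (· ≠ v) = l.filter (fun a => a ∉ (v :: vs)) := by
      rw [hl', List.filter_filter]
      apply List.filter_congr
      intro a _
      simp [List.mem_cons, not_or, And.comm]
    have hcount : l'.count v = l.count v := by
      rw [hl']
      rw [List.count_filter]
      simp [hvnotvs]
    have e2 : Cgr (wrd k l' * (((vs.map (fun u => X k u ^ (l.count u))).prod) * (c * cP k γ)))
        (wrd k (l.filter (fun a => a ∉ (v :: vs))) *
          (((v :: vs).map (fun u => X k u ^ (l.count u))).prod * (c * cP k γ))) := by
      have := h2'
      rw [hfil, hcount] at this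
      refine (cgr_of_eq ?_).trans (this.trans (cgr_of_eq ?_))
      · noncomm_ring
      · rw [List.map_cons, List.prod_cons]
        noncomm_ring
    exact h1.trans e2

theorem endIdx_map (γ : List (ℕ × ℕ)) (cnt : ℕ → ℕ) :
    endIdx (γ.map (fun g => ((g.1, cnt g.1), (g.2, cnt g.2)))) = flat γ := by
  induction γ with
  | nil => rfl
  | cons g t ih => simp [endIdx, flat_cons, ih]

theorem endProd_split (γ : List (ℕ × ℕ)) (cnt : ℕ → ℕ) :
    Cgr (endProd k (γ.map (fun g => ((g.1, cnt g.1), (g.2, cnt g.2)))))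
      (cP k γ * (γ.map (fun g => X k g.1 ^ cnt g.1 * X k g.2 ^ cnt g.2)).prod) := by
  induction γ with
  | nil => exact cgr_of_eq (by simp [endProd])
  | cons g t ih =>
    rw [List.map_cons, endProd_cons, List.map_cons, List.prod_cons, cP_cons]
    have h1 := ih.mul_left (ringComm (X k g.1) (X k g.2) * X k g.1 ^ cnt g.1 * X k g.2 ^ cnt g.2)
    refine h1.trans ?_
    have sw := (isc_cP (k := k) t).swap (X k g.1 ^ cnt g.1 * X k g.2 ^ cnt g.2)
    have hmid := (sw.mul_left (ringComm (X k g.1) (X k g.2))).mul_right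
      ((t.map (fun g => X k g.1 ^ cnt g.1 * X k g.2 ^ cnt g.2)).prod)
    refine (cgr_of_eq ?_).trans (hmid.trans (cgr_of_eq ?_)) <;> noncomm_ring

theorem prod_flat (γ : List (ℕ × ℕ)) (cnt : ℕ → ℕ) :
    ((flat γ).map (fun v => X k v ^ cnt v)).prod
      = (γ.map (fun g => X k g.1 ^ cnt g.1 * X k g.2 ^ cnt g.2)).prod := by
  induction γ with
  | nil => rfl
  | cons g t ih =>
    rw [flat_cons, List.map_cons, List.map_cons, List.map_cons, List.prod_cons,
      List.prod_cons, List.prod_cons, ih, mul_assoc]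

theorem pack_exists : ∀ (B : List ℕ), List.Pairwise (· ≤ ·) B →
    ∃ bs : List (ℕ × ℕ), wrd k B = begProd k bs
      ∧ List.Chain' (· < ·) (bs.map Prod.fst)
      ∧ (∀ q ∈ bs, 1 ≤ q.2) ∧ (∀ q ∈ bs, q.1 ∈ B) ∧ (B = [] ↔ bs = []) := by
  intro B
  induction B with
  | nil => exact fun _ => ⟨[], by simp [begProd], by simp [List.Chain'], by simp, by simp, by simp⟩
  | cons a B ih =>
    intro hpw
    have hble : ∀ b ∈ B, a ≤ b := fun b hb => (List.pairwise_cons.mp hpw).1 b hb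
    obtain ⟨bs', heq, hch, hexp, hmem, hnil⟩ := ih (List.pairwise_cons.mp hpw).2
    cases bs' with
    | nil =>
      refine ⟨[(a, 1)], ?_, by simp [List.Chain'], by simp, by simp, by simp⟩
      have hB : B = [] := hnil.mpr rfl
      subst hB
      simp [begProd, wrd]
    | cons q bs'' =>
      by_cases hqa : q.1 = a
      · refine ⟨(a, q.2 + 1) :: bs'', ?_, ?_, ?_, ?_, by simp⟩
        · rw [wrd_cons, heq]
          rw [begProd, begProd, List.map_cons, List.map_cons, List.prod_cons,
            List.prod_cons, hqa, pow_succ']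
          noncomm_ring
        · have := hch
          rw [List.map_cons] at this ⊢
          rw [hqa] at this
          exact this
        · intro r hr
          rcases List.mem_cons.mp hr with rfl | hr
          · omega
          · exact hexp r (List.mem_cons_of_mem q hr)
        · intro r hr
          rcases List.mem_cons.mp hr with rfl | hr
          · exact List.mem_cons_self
          · exact List.mem_cons_of_mem a (hmem r (List.mem_cons_of_mem q hr))
      · refine ⟨(a, 1) :: q :: bs'', ?_, ?_, ?_, ?_, by simp⟩
        · rw [wrd_cons, heq]
          rw [begProd, begProd, List.map_cons, List.prod_cons]
          simp [pow_one]
        · rw [List.map_cons, List.map_cons, List.Chain', List.isChain_cons_cons]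
          constructor
          · have h1 : a ≤ q.1 := hble q.1 (hmem q (List.mem_cons_self))
            omega
          · have := hch
            rwa [List.map_cons] at this
        · intro r hr
          rcases List.mem_cons.mp hr with rfl | hr
          · omega
          · exact hexp r hr
        · intro r hr
          rcases List.mem_cons.mp hr with rfl | hr
          · exact List.mem_cons_self
          · exact List.mem_cons_of_mem a (hmem r hr)

end St16

end Chunk10
section Chunk11

namespace St16

variable {k : Type*} [Field k]

theorem mem_R1 {p : ℕ} {bs : List (ℕ × ℕ)} {es : List ((ℕ × ℕ) × (ℕ × ℕ))}
    (hss : SSElt bs es) (hex : ∃ q ∈ bs, ¬ (p ∣ q.2)) :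
    begProd k bs * endProd k es ∈ R1space k p := by
  refine Submodule.subset_span (Or.inr ⟨bs, es, hss, ?_, hex, rfl⟩)
  obtain ⟨q, hq, _⟩ := hex
  exact List.ne_nil_of_mem hq

theorem sorted_canon_mem (h2 : (2 : k) ≠ 0) {p : ℕ} (hchar : ringChar k = p)
    (hodd : p ≠ 0 → p % 2 = 1) (s : List ℕ) (hs : List.Pairwise (· ≤ ·) s)
    (γ : List (ℕ × ℕ)) (hγ : List.Chain' (· < ·) (flat γ)) :
    wrd k s * cP k γ ∈ NN k p := by
  have hvnd : (flat γ).Nodup := by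
    have hpw : List.Pairwise (· < ·) (flat γ) := List.isChain_iff_pairwise.mp hγ
    exact hpw.imp (fun h => Nat.ne_of_lt h)
  have hext := extract_many h2 (flat γ) hvnd (fun v hv => hv) s 1
  set B := s.filter (fun a => a ∉ flat γ) with hB
  have hBpw : List.Pairwise (· ≤ ·) B := List.Pairwise.sublist List.filter_sublist hs
  obtain ⟨bs, hpack, hch, hexp, hmemB, hnil⟩ := pack_exists (k := k) B hBpw
  set es := γ.map (fun g => ((g.1, s.count g.1), (g.2, s.count g.2))) with hes
  have hsplit := endProd_split (k := k) γ (fun v => s.count v)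
  have hPex : ((flat γ).map (fun v => X k v ^ s.count v)).prod
      = (γ.map (fun g => X k g.1 ^ s.count g.1 * X k g.2 ^ s.count g.2)).prod :=
    prod_flat γ _
  have hchain : Cgr (((flat γ).map (fun v => X k v ^ s.count v)).prod * (1 * cP k γ))
      (endProd k es) := by
    have t1 : Cgr (((flat γ).map (fun v => X k v ^ s.count v)).prod * (1 * cP k γ))
        (cP k γ * ((flat γ).map (fun v => X k v ^ s.count v)).prod) :=
      (cgr_of_eq (by rw [one_mul])).trans ((isc_cP (k := k) γ).swap _)
    have t2 : cP k γ * ((flat γ).map (fun v => X k v ^ s.count v)).prod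
        = cP k γ * (γ.map (fun g => X k g.1 ^ s.count g.1 * X k g.2 ^ s.count g.2)).prod := by
      rw [hPex]
    exact t1.trans ((cgr_of_eq t2).trans hsplit.symm)
  have hcore : Cgr (wrd k s * cP k γ) (begProd k bs * endProd k es) := by
    have e0 : wrd k s * cP k γ = wrd k s * (1 * cP k γ) := by rw [one_mul]
    refine (cgr_of_eq e0).trans (hext.trans ?_)
    refine (hchain.mul_left (wrd k B)).trans (cgr_of_eq ?_)
    rw [hpack]
  have hendIdx : endIdx es = flat γ := by
    rw [hes]; exact endIdx_map γ (fun v => s.count v)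
  have hdisj : ∀ q ∈ bs, q.1 ∉ endIdx es := by
    intro q hq
    rw [hendIdx]
    have hqB : q.1 ∈ B := hmemB q hq
    have := List.of_mem_filter hqB
    simpa using this
  have hendch : List.Chain' (· < ·) (endIdx es) := by rw [hendIdx]; exact hγ
  by_cases hboth : bs = [] ∧ es = []
  · obtain ⟨hb1, hb2⟩ := hboth
    have hone : begProd k bs * endProd k es = 1 := by
      rw [hb1, hb2]; simp [begProd, endProd]
    refine hcore.memNN ?_
    rw [hone]
    exact one_mem_NN p
  · have hne : bs ≠ [] ∨ es ≠ [] := by tauto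
    by_cases hex : ∃ q ∈ bs, ¬ ((p : ℕ) ∣ q.2)
    · have hss : SSElt bs es := ⟨hne, hch, hexp, hendch, hdisj⟩
      exact hcore.memNN (r1_le_NN p (mem_R1 hss hex))
    · push_neg at hex
      have hp0 : p = 0 → bs = [] := by
        intro hp
        subst hp
        cases bs with
        | nil => rfl
        | cons q t =>
          have ha := hex q (List.mem_cons_self)
          have hb := hexp q (List.mem_cons_self)
          rw [Nat.zero_dvd] at ha
          omega
      exact hcore.memNN (ph4 h2 hchar hodd bs es hex hp0 hne)

end St16

end Chunk11
section Chunk12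

namespace St16

variable {k : Type*} [Field k]

def inv : List ℕ → ℕ
  | [] => 0
  | a :: t => t.countP (fun b => decide (b < a)) + inv t

theorem inv_append (xs ys : List ℕ) :
    inv (xs ++ ys) = inv xs + (xs.map (fun x => ys.countP (fun b => decide (b < x)))).sum
      + inv ys := by
  induction xs with
  | nil => simp [inv]
  | cons x xs ih =>
    simp only [List.cons_append, inv, List.append_eq, List.countP_append, ih, List.map_cons, List.sum_cons]
    omega

theorem inv_swap {a b : ℕ} (hba : b < a) (l₁ l₂ : List ℕ) :
    inv (l₁ ++ b :: a :: l₂) + 1 = inv (l₁ ++ a :: b :: l₂) := by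
  rw [inv_append, inv_append]
  have hmap : (fun x => (b :: a :: l₂).countP (fun c => decide (c < x)))
      = (fun x => (a :: b :: l₂).countP (fun c => decide (c < x))) := by
    funext x
    simp only [List.countP_cons]
    omega
  rw [hmap]
  have h1 : inv (b :: a :: l₂) + 1 = inv (a :: b :: l₂) := by
    have ha' : ¬ (a < b) := by omega
    simp only [inv, List.countP_cons, decide_eq_true_eq]
    rw [if_pos hba, if_neg ha']
    omega
  omega

theorem not_chain_split : ∀ {l : List ℕ}, ¬ List.Chain' (· ≤ ·) l →
    ∃ l₁ a b l₂, l = l₁ ++ a :: b :: l₂ ∧ b < a := by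
  intro l
  induction l with
  | nil => intro h; exact absurd List.isChain_nil h
  | cons x t ih =>
    intro h
    cases t with
    | nil => exact absurd (List.isChain_singleton x) h
    | cons y t' =>
      by_cases hxy : x ≤ y
      · have h2 : ¬ List.Chain' (· ≤ ·) (y :: t') := by
          intro hc
          exact h (List.isChain_cons_cons.mpr ⟨hxy, hc⟩)
        obtain ⟨l₁, a, b, l₂, heq, hba⟩ := ih h2
        exact ⟨x :: l₁, a, b, l₂, by rw [heq]; rfl, hba⟩
      · exact ⟨[], x, y, t', rfl, by omega⟩

theorem main_word (h2 : (2 : k) ≠ 0) {p : ℕ} (hchar : ringChar k = p)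
    (hodd : p ≠ 0 → p % 2 = 1) :
    ∀ (N : ℕ) (l : List ℕ), l.length ≤ N → ∀ γ, wrd k l * cP k γ ∈ NN k p := by
  intro N
  induction N using Nat.strong_induction_on with
  | _ N ihN =>
    have hsorted_case : ∀ l, List.Chain' (· ≤ ·) l → ∀ γ : List (ℕ × ℕ),
        wrd k l * cP k γ ∈ NN k p := by
      intro l hsort γ
      by_cases hnd : (flat γ).Nodup
      · obtain ⟨ε, t, _hperm, hchain, hcgr⟩ := sortG h2 γ.length γ le_rfl hnd
        have h1 : Cgr (wrd k l * cP k γ) (ε • (wrd k l * cP k t)) := by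
          refine (hcgr.mul_left (wrd k l)).trans (cgr_of_eq ?_)
          rw [mul_smul_comm]
        exact Cgr.memNN_smul ε h1
          (sorted_canon_mem h2 hchar hodd l (List.isChain_iff_pairwise.mp hsort) t hchain)
      · exact t3_le_NN p (killG h2 γ hnd (wrd k l))
    have inner : ∀ (I : ℕ) (l : List ℕ), l.length ≤ N → inv l ≤ I → ∀ γ,
        wrd k l * cP k γ ∈ NN k p := by
      intro I
      induction I with
      | zero =>
        intro l hlen hinv γ
        by_cases hsort : List.Chain' (· ≤ ·) l
        · exact hsorted_case l hsort γ
        · obtain ⟨l₁, a, b, l₂, heq, hba⟩ := not_chain_split hsort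
          exfalso
          have := inv_swap hba l₁ l₂
          rw [← heq] at this
          omega
      | succ I ihI =>
        intro l hlen hinv γ
        by_cases hsort : List.Chain' (· ≤ ·) l
        · exact hsorted_case l hsort γ
        · obtain ⟨l₁, a, b, l₂, heq, hba⟩ := not_chain_split hsort
          -- split into swapped word plus a commutator term
          have ew : wrd k l * cP k γ
              = wrd k (l₁ ++ b :: a :: l₂) * cP k γ
                + wrd k l₁ * ringComm (X k a) (X k b) * wrd k l₂ * cP k γ := by
            rw [heq, wrd_append, wrd_append, wrd_cons, wrd_cons, wrd_cons, wrd_cons]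
            unfold ringComm
            noncomm_ring
          rw [ew]
          refine add_mem ?_ ?_
          · -- swapped word: fewer inversions
            have hlen' : (l₁ ++ b :: a :: l₂).length ≤ N := by
              have := congrArg List.length heq
              simp only [List.length_append, List.length_cons] at this hlen ⊢
              omega
            have hinv' : inv (l₁ ++ b :: a :: l₂) ≤ I := by
              have := inv_swap hba l₁ l₂
              rw [← heq] at this
              omega
            exact ihI _ hlen' hinv' γ
          · -- commutator term
            have hZ : IsC (ringComm (X k a) (X k b)) := isc_comm _ _
            have hcgr : Cgr (wrd k l₁ * ringComm (X k a) (X k b) * wrd k l₂ * cP k γ)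
                (wrd k (l₁ ++ l₂) * cP k (γ ++ [(a, b)])) := by
              have sw1 := (hZ.swap (wrd k l₂)).symm
              -- wrd l₁ * Z * wrd l₂ * cP γ ≋ wrd l₁ * wrd l₂ * Z * cP γ
              have t1 := (sw1.mul_left (wrd k l₁)).mul_right (cP k γ)
              -- then Z * cP γ ≋ cP γ * Z
              have t2 := (hZ.swap (cP k γ)).symm.mul_left (wrd k l₁ * wrd k l₂)
              refine (cgr_of_eq ?_).trans (t1.trans ((cgr_of_eq ?_).trans
                (t2.trans (cgr_of_eq ?_))))
              · noncomm_ring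
              · noncomm_ring
              · rw [wrd_append, cP_append, cP_cons, cP_nil]
                noncomm_ring
            have hlen2 : (l₁ ++ l₂).length ≤ N - 1 := by
              have := congrArg List.length heq
              simp only [List.length_append, List.length_cons] at this hlen ⊢
              omega
            have hN : N - 1 < N := by
              have := congrArg List.length heq
              simp only [List.length_append, List.length_cons] at this hlen
              omega
            exact hcgr.memNN (ihN (N - 1) hN (l₁ ++ l₂) hlen2 (γ ++ [(a, b)]))
    intro l hlen γ
    exact inner (inv l) l hlen le_rfl γ

theorem span_words_mul {a b : F k}
    (ha : a ∈ Submodule.span k (Set.range (wrd k)))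
    (hb : b ∈ Submodule.span k (Set.range (wrd k))) :
    a * b ∈ Submodule.span k (Set.range (wrd k)) := by
  induction ha using Submodule.span_induction with
  | mem x hx =>
    induction hb using Submodule.span_induction with
    | mem y hy =>
      obtain ⟨l, rfl⟩ := hx
      obtain ⟨l', rfl⟩ := hy
      rw [← wrd_append]
      exact Submodule.subset_span ⟨l ++ l', rfl⟩
    | zero => rw [mul_zero]; exact Submodule.zero_mem _
    | add y z _ _ hy hz => rw [mul_add]; exact add_mem hy hz
    | smul c y _ hy => rw [mul_smul_comm]; exact Submodule.smul_mem _ _ hy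
  | zero => rw [zero_mul]; exact Submodule.zero_mem _
  | add x y _ _ hx hy => rw [add_mul]; exact add_mem hx hy
  | smul c x _ hx => rw [smul_mul_assoc]; exact Submodule.smul_mem _ _ hx

theorem span_words_top (x : F k) : x ∈ Submodule.span k (Set.range (wrd k)) := by
  induction x using FreeAlgebra.induction with
  | grade0 r =>
    rw [Algebra.algebraMap_eq_smul_one]
    exact Submodule.smul_mem _ _ (Submodule.subset_span ⟨[], rfl⟩)
  | grade1 i =>
    refine Submodule.subset_span ⟨[i], ?_⟩
    simp [wrd, X]
  | mul a b ha hb => exact span_words_mul ha hb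
  | add a b ha hb => exact add_mem ha hb

end St16

end Chunk12
open St16 in
/-- Let k be a field of characteristic p ≠ 2.  Then `k⟨X⟩ = R₁ + S₁ + T⁽³⁾`. -/
theorem statement16 (p : ℕ) (hp : ringChar k = p) (hp2 : p ≠ 2) :
    R1space k p ⊔ S1space k p ⊔ T3U k = ⊤ := by
  have h2 : (2 : k) ≠ 0 := by
    intro h20
    have hd : ringChar k ∣ 2 := (ringChar.spec k 2).mp (by exact_mod_cast h20)
    rw [hp] at hd
    rcases (Nat.prime_two.eq_one_or_self_of_dvd p hd) with h1 | h1
    · have hone : ((1 : ℕ) : k) = 0 := (ringChar.spec k 1).mpr (by rw [hp, h1])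
      simp at hone
    · exact hp2 h1
  have hodd : p ≠ 0 → p % 2 = 1 := by
    intro hpne
    haveI hP : CharP k p := hp ▸ ringChar.charP k
    rcases CharP.char_is_prime_or_zero k p with hprime | h0
    · rcases hprime.eq_two_or_odd with h1 | h1
      · exact absurd h1 hp2
      · exact h1
    · exact absurd h0 hpne
  rw [eq_top_iff]
  intro x _
  have hx := span_words_top (k := k) x
  have hle : Submodule.span k (Set.range (wrd k)) ≤ NN k p := by
    rw [Submodule.span_le]
    rintro y ⟨l, rfl⟩
    have hm := main_word h2 hp hodd l.length l le_rfl []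
    simpa [cP] using hm
  exact hle hx
end
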